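/- arXiv:1702.07283 — 7 statements merged into one kernel-verified Lean document; each statement's English description precedes it below -/
import Mathlib

section
/- Let k ≥ 2 and m ≥ 1 be integers and let a be a real number with 0 < a < k/2. Let V be a chi-square random variable with k degrees of freedom and let Z₁,…,Z_m be standard normal N(0,1) random variables, with V, Z₁,…,Z_m jointly independent. Then P( (k/V)·max_{1≤j≤m} Z_j² ≥ 2a ) ≤ 2^{3/2}·m·e^{−a/2} / ( √(πa)·(1 − 1/k) ). -/
open MeasureTheory ProbabilityTheory Real

open Set

open scoped ENNReal NNReal

lemma aux_tail_int (t : ℝ) :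
    ∫ x in Ioi t, x * Real.exp (-(1/2) * x^2) = Real.exp (-(1/2) * t^2) := by
  have hderiv : ∀ x ∈ Ici t, HasDerivAt (fun y : ℝ => -Real.exp (-(1/2) * y^2))
      (x * Real.exp (-(1/2) * x^2)) x := by
    intro x _
    have h1 : HasDerivAt (fun y : ℝ => -(1/2) * y^2) (-(1/2) * (2*x)) x := by
      simpa using ((hasDerivAt_pow 2 x).const_mul (-(1/2):ℝ))
    have h2 := (h1.exp).neg
    exact h2.congr_deriv (by ring)
  have hint : IntegrableOn (fun x : ℝ => x * Real.exp (-(1/2) * x^2)) (Ioi t) :=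
    (integrable_mul_exp_neg_mul_sq (by norm_num : (0:ℝ) < 1/2)).integrableOn
  have htend : Filter.Tendsto (fun y : ℝ => -Real.exp (-(1/2) * y^2)) Filter.atTop (nhds 0) := by
    rw [show (0:ℝ) = -0 by ring]
    apply Filter.Tendsto.neg
    apply Real.tendsto_exp_atBot.comp
    have h5 : Filter.Tendsto (fun y : ℝ => (1/2) * y^2) Filter.atTop Filter.atTop :=
      (Filter.tendsto_pow_atTop two_ne_zero).const_mul_atTop (by norm_num)
    exact (Filter.tendsto_neg_atBot_iff.mpr h5).congr (by intro y; ring)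
  have h := MeasureTheory.integral_Ioi_of_hasDerivAt_of_tendsto' hderiv hint htend
  rw [h]; ring

-- Gaussian tail on Ici
lemma aux_gauss_tail_Ici {t : ℝ} (ht : 0 < t) :
    gaussianReal 0 1 (Set.Ici t) ≤ ENNReal.ofReal ((Real.sqrt (2*π))⁻¹ * (Real.exp (-t^2/2) / t)) := by
  rw [gaussianReal_apply 0 one_ne_zero]
  have hle : ∀ x ∈ Set.Ici t, gaussianPDF 0 1 x ≤
      ENNReal.ofReal ((Real.sqrt (2*π))⁻¹ / t * (x * Real.exp (-(1/2) * x ^ 2))) := by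
    intro x hx
    simp only [gaussianPDF, gaussianPDFReal]
    apply ENNReal.ofReal_le_ofReal
    have hx0 : t ≤ x := hx
    push_cast
    have h1 : (Real.sqrt (2*π*1))⁻¹ = (Real.sqrt (2*π))⁻¹ := by norm_num
    rw [h1]
    have h2 : -(x-0)^2/(2*1) = -(1/2) * x^2 := by ring
    rw [h2]
    have : (1:ℝ) ≤ x / t := (one_le_div ht).mpr hx0
    have hexp : (0:ℝ) < Real.exp (-(1/2)*x^2) := Real.exp_pos _
    have hs : (0:ℝ) < (Real.sqrt (2*π))⁻¹ := by positivity
    calc (Real.sqrt (2*π))⁻¹ * Real.exp (-(1/2)*x^2)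
        ≤ (Real.sqrt (2*π))⁻¹ * Real.exp (-(1/2)*x^2) * (x/t) :=
          le_mul_of_one_le_right (by positivity) this
      _ = (Real.sqrt (2*π))⁻¹ / t * (x * Real.exp (-(1/2)*x^2)) := by ring
  calc ∫⁻ x in Set.Ici t, gaussianPDF 0 1 x
      ≤ ∫⁻ x in Set.Ici t, ENNReal.ofReal ((Real.sqrt (2*π))⁻¹ / t * (x * Real.exp (-(1/2) * x ^ 2))) := by
        exact setLIntegral_mono (by fun_prop) hle
    _ = ENNReal.ofReal (∫ x in Set.Ici t, (Real.sqrt (2*π))⁻¹ / t * (x * Real.exp (-(1/2) * x ^ 2))) := by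
        rw [ofReal_integral_eq_lintegral_ofReal]
        · exact (Integrable.const_mul (by
            simpa using (integrable_mul_exp_neg_mul_sq (by norm_num : (0:ℝ) < 1/2)).integrableOn.integrable) _)
        · filter_upwards [ae_restrict_mem measurableSet_Ici] with x hx
          have : (0:ℝ) < x := lt_of_lt_of_le ht hx
          positivity
    _ ≤ ENNReal.ofReal ((Real.sqrt (2*π))⁻¹ * (Real.exp (-t^2/2) / t)) := by
        apply ENNReal.ofReal_le_ofReal
        rw [integral_const_mul, integral_Ici_eq_integral_Ioi, aux_tail_int]
        have : -(1/2) * t^2 = -t^2/2 := by ring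
        rw [this]
        ring_nf
        exact le_rfl

-- Gamma ratio: x * Γ(x) ≤ √(x+1/2) * Γ(x+1/2)
lemma aux_gamma_ratio {x : ℝ} (hx : 0 < x) :
    x * Real.Gamma x ≤ Real.sqrt (x + 1/2) * Real.Gamma (x + 1/2) := by
  have h1 : Real.Gamma (x + 1) ≤
      Real.Gamma (x + 1/2) ^ ((1:ℝ)/2) * Real.Gamma (x + 3/2) ^ ((1:ℝ)/2) := by
    have := Real.Gamma_mul_add_mul_le_rpow_Gamma_mul_rpow_Gamma
      (s := x + 1/2) (t := x + 3/2) (a := (1:ℝ)/2) (b := (1:ℝ)/2)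
      (by linarith) (by linarith) (by norm_num) (by norm_num) (by norm_num)
    convert this using 2
    ring
  have h2 : Real.Gamma (x + 3/2) = (x + 1/2) * Real.Gamma (x + 1/2) := by
    have h3 := Real.Gamma_add_one (show x + 1/2 ≠ (0:ℝ) by positivity)
    rw [show x + 1/2 + 1 = x + 3/2 by ring] at h3
    exact h3
  have hG : 0 < Real.Gamma (x + 1/2) := Real.Gamma_pos_of_pos (by positivity)
  rw [← Real.Gamma_add_one hx.ne']
  calc Real.Gamma (x+1) ≤ Real.Gamma (x + 1/2) ^ ((1:ℝ)/2) * Real.Gamma (x + 3/2) ^ ((1:ℝ)/2) := h1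
    _ = Real.sqrt (x + 1/2) * Real.Gamma (x + 1/2) := by
        rw [h2, Real.mul_rpow (by positivity) hG.le,
          ← Real.sqrt_eq_rpow, ← Real.sqrt_eq_rpow]
        rw [show Real.sqrt (Real.Gamma (x+1/2)) * (Real.sqrt (x+1/2) * Real.sqrt (Real.Gamma (x+1/2)))
            = Real.sqrt (x+1/2) * (Real.sqrt (Real.Gamma (x+1/2)) * Real.sqrt (Real.Gamma (x+1/2))) by ring]
        rw [Real.mul_self_sqrt hG.le]

-- F2: exp (a/2 - 1/4) ≤ (1 + 2a/k)^((k-1)/2)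
lemma aux_F2 {k : ℕ} (hk : 2 ≤ k) {a : ℝ} (ha : 0 < a) (hak : a < (k:ℝ)/2) :
    Real.exp (a/2 - 1/4) ≤ (1 + 2*a/(k:ℝ)) ^ (((k:ℝ)-1)/2) := by
  have hk0 : (0:ℝ) < k := by positivity
  have hc : (0:ℝ) < 2*a/(k:ℝ) := by positivity
  set c := 2*a/(k:ℝ) with hcdef
  have hlog : c / (1 + c) ≤ Real.log (1 + c) := by
    have h := Real.add_one_le_exp (Real.log (1+c))
    have h2 := Real.log_le_sub_one_of_pos (show (0:ℝ) < (1+c)⁻¹ by positivity)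
    rw [Real.log_inv] at h2
    have : 1 - (1+c)⁻¹ ≤ Real.log (1+c) := by linarith
    calc c/(1+c) = 1 - (1+c)⁻¹ := by field_simp; ring
      _ ≤ Real.log (1+c) := this
  have key : a/2 - 1/4 ≤ (((k:ℝ)-1)/2) * (c/(1+c)) := by
    have h1 : (((k:ℝ)-1)/2) * (c/(1+c)) = a*((k:ℝ)-1)/((k:ℝ)+2*a) := by
      rw [hcdef]
      field_simp
    rw [h1, le_div_iff₀ (by linarith)]
    have hfact : (2*a+1)*(a - (k:ℝ)/2) ≤ 0 :=
      mul_nonpos_of_nonneg_of_nonpos (by linarith) (by linarith)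
    nlinarith
  calc Real.exp (a/2 - 1/4) ≤ Real.exp ((((k:ℝ)-1)/2) * Real.log (1+c)) := by
        apply Real.exp_le_exp.mpr
        calc a/2-1/4 ≤ (((k:ℝ)-1)/2) * (c/(1+c)) := key
          _ ≤ (((k:ℝ)-1)/2) * Real.log (1+c) := by
              apply mul_le_mul_of_nonneg_left hlog
              have : (2:ℝ) ≤ (k:ℝ) := by exact_mod_cast hk
              linarith
    _ = (1 + c) ^ (((k:ℝ)-1)/2) := by
        rw [Real.rpow_def_of_pos (by linarith : (0:ℝ) < 1 + c), mul_comm]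

lemma aux_gauss_tail_sq {t : ℝ} (ht : 0 < t) :
    gaussianReal 0 1 {z : ℝ | t^2 ≤ z^2} ≤
      ENNReal.ofReal (2 * ((Real.sqrt (2*π))⁻¹ * (Real.exp (-t^2/2) / t))) := by
  have hset : {z : ℝ | t^2 ≤ z^2} = Set.Iic (-t) ∪ Set.Ici t := by
    ext z
    simp only [mem_setOf_eq, mem_union, mem_Iic, mem_Ici]
    constructor
    · intro h
      rcases le_or_gt z 0 with hz | hz
      · left; nlinarith
      · right; nlinarith
    · rintro (h | h) <;> nlinarith
  have hIic : gaussianReal 0 1 (Set.Iic (-t)) = gaussianReal 0 1 (Set.Ici t) := by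
    have hmap : (gaussianReal 0 1).map (fun x : ℝ => (-1) * x) = gaussianReal 0 1 := by
      rw [gaussianReal_map_const_mul (-1)]
      norm_num
    conv_lhs => rw [← hmap]
    rw [Measure.map_apply (by fun_prop) measurableSet_Iic]
    congr 1
    ext x
    simp only [mem_preimage, mem_Iic, mem_Ici]
    constructor <;> intro h <;> linarith
  rw [hset]
  calc gaussianReal 0 1 (Set.Iic (-t) ∪ Set.Ici t)
      ≤ gaussianReal 0 1 (Set.Iic (-t)) + gaussianReal 0 1 (Set.Ici t) := measure_union_le _ _
    _ ≤ ENNReal.ofReal ((Real.sqrt (2*π))⁻¹ * (Real.exp (-t^2/2) / t)) +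
        ENNReal.ofReal ((Real.sqrt (2*π))⁻¹ * (Real.exp (-t^2/2) / t)) := by
        rw [hIic]
        exact add_le_add (aux_gauss_tail_Ici ht) (aux_gauss_tail_Ici ht)
    _ = ENNReal.ofReal (2 * ((Real.sqrt (2*π))⁻¹ * (Real.exp (-t^2/2) / t))) := by
        rw [← ENNReal.ofReal_add (by positivity) (by positivity)]
        ring_nf

lemma aux_final {k : ℕ} (hk : 2 ≤ k) {a : ℝ} (ha : 0 < a) (hak : a < (k:ℝ)/2) :
    2 * (Real.sqrt (2*π))⁻¹ / Real.sqrt (2*a/(k:ℝ)) *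
      ((1/2:ℝ)^((k:ℝ)/2) * Real.Gamma (((k:ℝ)-1)/2) /
        (Real.Gamma ((k:ℝ)/2) * ((1/2:ℝ) + a/(k:ℝ))^(((k:ℝ)-1)/2))) ≤
      2^((3:ℝ)/2) * Real.exp (-a/2) / (Real.sqrt (π*a) * (1 - 1/(k:ℝ))) := by
  have hk2 : (2:ℝ) ≤ (k:ℝ) := by exact_mod_cast hk
  have hk0 : (0:ℝ) < k := by linarith
  set s : ℝ := ((k:ℝ)-1)/2 with hs_def
  set κ : ℝ := (k:ℝ)/2 with hκ_def
  have hs : 0 < s := by rw [hs_def]; linarith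
  have hκ : 0 < κ := by rw [hκ_def]; linarith
  have hκs : κ = s + 1/2 := by rw [hs_def, hκ_def]; ring
  have hGs : 0 < Real.Gamma s := Real.Gamma_pos_of_pos hs
  have hGκ : 0 < Real.Gamma κ := Real.Gamma_pos_of_pos hκ
  -- rewrite (1/2 + a/k)^s = (1/2)^s * (1+2a/k)^s
  have hsplit : ((1/2:ℝ) + a/(k:ℝ))^s = (1/2:ℝ)^s * (1 + 2*a/(k:ℝ))^s := by
    rw [← Real.mul_rpow (by norm_num) (by positivity)]
    congr 1
    field_simp
  -- (1/2)^κ = (1/2)^s * (√2)⁻¹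
  have hhalf : (1/2:ℝ)^κ = (1/2:ℝ)^s * (Real.sqrt 2)⁻¹ := by
    rw [hκs, Real.rpow_add (by norm_num : (0:ℝ) < 1/2)]
    congr 1
    rw [← Real.sqrt_eq_rpow, show ((1:ℝ)/2) = (2:ℝ)⁻¹ by norm_num, Real.sqrt_inv]
  set G : ℝ := Real.sqrt (2*a/(k:ℝ)) with hG_def
  set Q : ℝ := (1 + 2*a/(k:ℝ)) ^ s with hQ_def
  set P : ℝ := (1/2:ℝ) ^ s with hP_def
  set E : ℝ := Real.exp (a/2 - 1/4) with hE_def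
  have hGpos : 0 < G := Real.sqrt_pos.mpr (by positivity)
  have hQpos : 0 < Q := Real.rpow_pos_of_pos (by positivity) _
  have hPpos : 0 < P := Real.rpow_pos_of_pos (by norm_num) _
  have hEpos : 0 < E := Real.exp_pos _
  have hQE : E ≤ Q := aux_F2 hk ha hak
  have hGamma : Real.Gamma s ≤ Real.sqrt κ / s * Real.Gamma κ := by
    have h := aux_gamma_ratio hs
    rw [← hκs] at h
    rw [div_mul_eq_mul_div, le_div_iff₀ hs]
    linarith
  have hu : Real.sqrt 2 * Real.sqrt 2 = 2 := Real.mul_self_sqrt (by norm_num)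
  have hr : Real.sqrt (k:ℝ) * Real.sqrt (k:ℝ) = (k:ℝ) := Real.mul_self_sqrt hk0.le
  have hupos : 0 < Real.sqrt 2 := by positivity
  have hppos : 0 < Real.sqrt π := Real.sqrt_pos.mpr pi_pos
  have hqpos : 0 < Real.sqrt a := Real.sqrt_pos.mpr ha
  have hrpos : 0 < Real.sqrt (k:ℝ) := Real.sqrt_pos.mpr hk0
  have h2pi : Real.sqrt (2*π) = Real.sqrt 2 * Real.sqrt π := Real.sqrt_mul (by norm_num) π
  have hpia : Real.sqrt (π*a) = Real.sqrt π * Real.sqrt a := Real.sqrt_mul pi_pos.le a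
  have hGval : G = Real.sqrt 2 * Real.sqrt a / Real.sqrt (k:ℝ) := by
    rw [hG_def, Real.sqrt_div (by positivity) (k:ℝ), Real.sqrt_mul (by norm_num) a]
  have hκval : Real.sqrt κ = Real.sqrt (k:ℝ) / Real.sqrt 2 := by
    rw [hκ_def, Real.sqrt_div hk0.le 2]
  have h1k : (0:ℝ) < 1 - 1/(k:ℝ) := by
    have : 1/(k:ℝ) ≤ 1/2 := by
      rw [div_le_div_iff₀ hk0 (by norm_num)]
      linarith
    linarith
  have h1kval : 1 - 1/(k:ℝ) = 2*s/(k:ℝ) := by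
    rw [hs_def]
    field_simp
  have hEdecomp : E = Real.exp (a/2) * Real.exp (-(1:ℝ)/4) := by
    rw [hE_def, ← Real.exp_add]
    congr 1
    ring
  have hWval : Real.exp (-a/2) = (Real.exp (a/2))⁻¹ := by
    rw [← Real.exp_neg]
    congr 1
    ring
  have hypos : 0 < Real.exp (a/2) := Real.exp_pos _
  have he4pos : 0 < Real.exp (-(1:ℝ)/4) := Real.exp_pos _
  have hce4 : 1 ≤ 2^((3:ℝ)/2) * Real.exp (-(1:ℝ)/4) := by
    have h1 : Real.exp ((1:ℝ)/4) ≤ Real.exp 1 := Real.exp_le_exp.mpr (by norm_num)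
    have h2 : Real.exp 1 < 2.72 := lt_trans Real.exp_one_lt_d9 (by norm_num)
    have h3 : (2.72:ℝ) ≤ 2^((3:ℝ)/2) := by
      have hval : (2:ℝ)^((3:ℝ)/2) = 2 * Real.sqrt 2 := by
        rw [show ((3:ℝ)/2) = 1 + 1/2 by norm_num, Real.rpow_add (by norm_num), Real.rpow_one,
          ← Real.sqrt_eq_rpow]
      rw [hval]
      have h136 : (1.36:ℝ) ≤ Real.sqrt 2 := (Real.le_sqrt (by norm_num) (by norm_num)).mpr (by norm_num)
      linarith
    have h4 : Real.exp ((1:ℝ)/4) ≤ 2^((3:ℝ)/2) := by linarith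
    have h5 : Real.exp ((1:ℝ)/4) * Real.exp (-(1:ℝ)/4) = 1 := by
      rw [← Real.exp_add]; norm_num
    calc (1:ℝ) = Real.exp ((1:ℝ)/4) * Real.exp (-(1:ℝ)/4) := h5.symm
      _ ≤ 2^((3:ℝ)/2) * Real.exp (-(1:ℝ)/4) := mul_le_mul_of_nonneg_right h4 he4pos.le
  calc 2 * (Real.sqrt (2*π))⁻¹ / G *
      ((1/2:ℝ)^κ * Real.Gamma s / (Real.Gamma κ * ((1/2:ℝ) + a/(k:ℝ))^s))
      = 2 * (Real.sqrt (2*π))⁻¹ / G * ((Real.sqrt 2)⁻¹ * (Real.Gamma s / (Real.Gamma κ * Q))) := by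
        rw [hhalf, hsplit]
        field_simp
    _ ≤ 2 * (Real.sqrt (2*π))⁻¹ / G *
        ((Real.sqrt 2)⁻¹ * ((Real.sqrt κ / s * Real.Gamma κ) / (Real.Gamma κ * E))) := by
        gcongr
    _ = (2 * Real.sqrt κ) / (Real.sqrt (2*π) * G * Real.sqrt 2 * s * E) := by
        field_simp
    _ ≤ 2^((3:ℝ)/2) * Real.exp (-a/2) / (Real.sqrt (π*a) * (1 - 1/(k:ℝ))) := by
        rw [div_le_div_iff₀ (by positivity) (by positivity)]
        rw [hpia, h2pi, hκval, hGval, h1kval, hEdecomp, hWval]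
        set p := Real.sqrt π with hp_def
        set q := Real.sqrt a with hq_def
        set u := Real.sqrt 2 with hu_def
        set r := Real.sqrt (k:ℝ) with hr_def
        set y := Real.exp (a/2) with hy_def
        set e4 := Real.exp (-(1:ℝ)/4) with he4_def
        set c := (2:ℝ)^((3:ℝ)/2) with hc_def
        have hrne : r ≠ 0 := hrpos.ne'
        have hune : u ≠ 0 := hupos.ne'
        have hyne : y ≠ 0 := hypos.ne'
        have hkne : ((k:ℝ)) ≠ 0 := hk0.ne'
        have e1 : 2 * (r/u) * (p*q*(2*s/(k:ℝ))) = (p*q*s*u/r) * 2 := by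
          rw [← hr]
          field_simp
          linear_combination (-1) * hu
        have e2 : c * y⁻¹ * (u*p*(u*q/r)*u*s*(y*e4)) = (p*q*s*u/r) * (2*(c*e4)) := by
          field_simp
          linear_combination c * hu
        rw [e1, e2]
        have hFpos : (0:ℝ) ≤ p*q*s*u/r := by positivity
        apply mul_le_mul_of_nonneg_left _ hFpos
        linarith [hce4]

lemma aux_pointwise {k : ℕ} (hk : 2 ≤ k) {a v : ℝ} (ha : 0 < a) (hv : 0 < v) :
    gammaPDFReal ((k:ℝ)/2) (1/2) v * (2 * ((Real.sqrt (2*π))⁻¹ *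
        (Real.exp (-(Real.sqrt (2*a*v/(k:ℝ)))^2/2) / Real.sqrt (2*a*v/(k:ℝ))))) =
      (2 * (Real.sqrt (2*π))⁻¹ / Real.sqrt (2*a/(k:ℝ)) *
        ((1/2:ℝ)^((k:ℝ)/2) * Real.Gamma (((k:ℝ)-1)/2) /
          (Real.Gamma ((k:ℝ)/2) * ((1/2:ℝ) + a/(k:ℝ))^(((k:ℝ)-1)/2)))) *
      gammaPDFReal (((k:ℝ)-1)/2) ((1/2:ℝ) + a/(k:ℝ)) v := by
  have hk2 : (2:ℝ) ≤ (k:ℝ) := by exact_mod_cast hk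
  have hk0 : (0:ℝ) < k := by linarith
  have hs : (0:ℝ) < ((k:ℝ)-1)/2 := by linarith
  have hκ : (0:ℝ) < (k:ℝ)/2 := by linarith
  have hGs : 0 < Real.Gamma (((k:ℝ)-1)/2) := Real.Gamma_pos_of_pos hs
  have hGκ : 0 < Real.Gamma ((k:ℝ)/2) := Real.Gamma_pos_of_pos hκ
  have hlam : (0:ℝ) < (1/2:ℝ) + a/(k:ℝ) := by positivity
  have hlams : (0:ℝ) < ((1/2:ℝ) + a/(k:ℝ))^(((k:ℝ)-1)/2) := Real.rpow_pos_of_pos hlam _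
  rw [gammaPDFReal, gammaPDFReal, if_pos hv.le, if_pos hv.le]
  have hsq : (Real.sqrt (2*a*v/(k:ℝ)))^2 = 2*a*v/(k:ℝ) := Real.sq_sqrt (by positivity)
  have ht : Real.sqrt (2*a*v/(k:ℝ)) = Real.sqrt (2*a/(k:ℝ)) * Real.sqrt v := by
    rw [show 2*a*v/(k:ℝ) = (2*a/(k:ℝ))*v by ring, Real.sqrt_mul (by positivity) v]
  have hvs : Real.sqrt v = v ^ ((1:ℝ)/2) := by
    rw [← Real.sqrt_eq_rpow]
  have hvpow : v ^ ((k:ℝ)/2 - 1) = v ^ (((k:ℝ)-1)/2 - 1) * v ^ ((1:ℝ)/2) := by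
    rw [← Real.rpow_add hv]
    congr 1
    ring
  have hE : Real.exp (-(1/2*v)) * Real.exp (-(2*a*v/(k:ℝ))/2) =
      Real.exp (-(((1/2:ℝ)+a/(k:ℝ))*v)) := by
    rw [← Real.exp_add]
    congr 1
    field_simp
    ring
  have hGne : Real.sqrt (2*a/(k:ℝ)) ≠ 0 := by positivity
  have hvne : v ^ ((1:ℝ)/2) ≠ 0 := by positivity
  rw [hsq, ht, hvs, hvpow, ← hE]
  set A := (1/2:ℝ)^((k:ℝ)/2)
  set B := Real.Gamma ((k:ℝ)/2)
  set C := Real.Gamma (((k:ℝ)-1)/2)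
  set L := ((1/2:ℝ) + a/(k:ℝ))^(((k:ℝ)-1)/2)
  set X := v ^ (((k:ℝ)-1)/2 - 1)
  set Y := v ^ ((1:ℝ)/2)
  set E1 := Real.exp (-(1/2*v))
  set E2 := Real.exp (-(2*a*v/(k:ℝ))/2)
  set G := Real.sqrt (2*a/(k:ℝ))
  set Z := (Real.sqrt (2*π))⁻¹
  have hBne : B ≠ 0 := hGκ.ne'
  have hCne : C ≠ 0 := hGs.ne'
  have hLne : L ≠ 0 := hlams.ne'
  field_simp

/-- If `V ~ χ²_k` and `Z₁, …, Z_m` are standard normals, all jointly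
independent, then for `0 < a < k/2`,
`P((k/V) · max_j Z_j² ≥ 2a) ≤ 2^{3/2} m e^{-a/2} / (√(πa) (1 - 1/k))`. -/
theorem chiSq_max_gaussian_ratio_tail_bound
    {Ω : Type*} [MeasurableSpace Ω] (P : Measure Ω) [IsProbabilityMeasure P]
    (k m : ℕ) (hk : 2 ≤ k) (hm : 1 ≤ m)
    (a : ℝ) (ha : 0 < a) (hak : a < (k : ℝ) / 2)
    (V : Ω → ℝ) (Z : Fin m → Ω → ℝ)
    (hVmeas : Measurable V) (hZmeas : ∀ j, Measurable (Z j))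
    (hV : Measure.map V P = gammaMeasure ((k : ℝ) / 2) (1 / 2))
    (hZ : ∀ j, Measure.map (Z j) P = gaussianReal 0 1)
    (hindep : iIndepFun
      (Fin.cases (motive := fun _ => Ω → ℝ) V Z) P) :
    P {ω | 2 * a ≤ (k : ℝ) / V ω * (⨆ j : Fin m, (Z j ω) ^ 2)} ≤
      ENNReal.ofReal (2 ^ ((3 : ℝ) / 2) * m * Real.exp (-a / 2) /
        (Real.sqrt (π * a) * (1 - 1 / (k : ℝ)))) := by
  have hk2 : (2:ℝ) ≤ (k:ℝ) := by exact_mod_cast hk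
  have hk0 : (0:ℝ) < k := by linarith
  have hs : (0:ℝ) < ((k:ℝ)-1)/2 := by linarith
  have hlam : (0:ℝ) < (1/2:ℝ) + a/(k:ℝ) := by positivity
  haveI : Nonempty (Fin m) := ⟨⟨0, hm⟩⟩
  set Ej : Fin m → Set Ω := fun j => {ω | 2*a*V ω ≤ (k:ℝ)*(Z j ω)^2} with hEj_def
  -- event inclusion
  have hsub : {ω | 2 * a ≤ (k : ℝ) / V ω * (⨆ j : Fin m, (Z j ω) ^ 2)} ⊆ ⋃ j, Ej j := by
    intro ω hω
    simp only [mem_setOf_eq] at hω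
    have hM0 : 0 ≤ ⨆ j : Fin m, (Z j ω) ^ 2 :=
      Real.iSup_nonneg (fun j => sq_nonneg _)
    have hVpos : 0 < V ω := by
      by_contra hne
      push_neg at hne
      have h1 : (k:ℝ) / V ω ≤ 0 := div_nonpos_iff.mpr (Or.inl ⟨hk0.le, hne⟩)
      have h2 : (k:ℝ) / V ω * (⨆ j : Fin m, (Z j ω) ^ 2) ≤ 0 :=
        mul_nonpos_of_nonpos_of_nonneg h1 hM0
      linarith
    have hkey : 2*a*V ω ≤ (k:ℝ) * ⨆ j : Fin m, (Z j ω) ^ 2 := by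
      rw [div_mul_eq_mul_div, le_div_iff₀ hVpos] at hω
      linarith [hω]
    obtain ⟨j, hj⟩ := Finite.exists_max (fun j : Fin m => (Z j ω)^2)
    have hle : (⨆ i : Fin m, (Z i ω) ^ 2) ≤ (Z j ω)^2 := ciSup_le hj
    refine mem_iUnion.mpr ⟨j, ?_⟩
    simp only [hEj_def, mem_setOf_eq]
    nlinarith [hle, hkey]
  -- per-j bound
  have hperj : ∀ j, P (Ej j) ≤ ENNReal.ofReal
      (2^((3:ℝ)/2) * Real.exp (-a/2) / (Real.sqrt (π*a) * (1 - 1/(k:ℝ)))) := by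
    intro j
    have hpair : IndepFun V (Z j) P := by
      have h := hindep.indepFun (i := 0) (j := j.succ) (Fin.succ_ne_zero j).symm
      simpa using h
    have hjoint : P.map (fun ω => (V ω, Z j ω)) = (P.map V).prod (P.map (Z j)) :=
      (indepFun_iff_map_prod_eq_prod_map_map hVmeas.aemeasurable
        (hZmeas j).aemeasurable).mp hpair
    set S : Set (ℝ × ℝ) := {p : ℝ × ℝ | 2*a*p.1 ≤ (k:ℝ)*p.2^2} with hS_def
    have hS : MeasurableSet S := by
      apply measurableSet_le <;> fun_prop
    have hPEj : P (Ej j) = ((P.map V).prod (P.map (Z j))) S := by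
      rw [← hjoint, Measure.map_apply (hVmeas.prodMk (hZmeas j)) hS]
      rfl
    rw [hPEj, hV, hZ j, Measure.prod_apply hS]
    -- slice function
    have hslice : ∀ v : ℝ, (Prod.mk v ⁻¹' S) = {z : ℝ | 2*a*v ≤ (k:ℝ)*z^2} := fun v => rfl
    have hgp1 : Measurable (gammaPDF ((k:ℝ)/2) (1/2)) :=
      (measurable_gammaPDFReal _ _).ennreal_ofReal
    have hgp2 : Measurable (gammaPDF (((k:ℝ)-1)/2) ((1/2:ℝ) + a/(k:ℝ))) :=
      (measurable_gammaPDFReal _ _).ennreal_ofReal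
    rw [gammaMeasure]
    rw [lintegral_withDensity_eq_lintegral_mul _ hgp1
      (measurable_measure_prodMk_left hS)]
    set D := 2 * (Real.sqrt (2*π))⁻¹ / Real.sqrt (2*a/(k:ℝ)) *
        ((1/2:ℝ)^((k:ℝ)/2) * Real.Gamma (((k:ℝ)-1)/2) /
          (Real.Gamma ((k:ℝ)/2) * ((1/2:ℝ) + a/(k:ℝ))^(((k:ℝ)-1)/2))) with hD_def
    have hDnn : 0 ≤ D := by
      rw [hD_def]
      positivity
    have hbound : ∀ᵐ v ∂(volume : Measure ℝ),
        (gammaPDF ((k:ℝ)/2) (1/2) * fun v => gaussianReal 0 1 (Prod.mk v ⁻¹' S)) v ≤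
          ENNReal.ofReal D * gammaPDF (((k:ℝ)-1)/2) ((1/2:ℝ) + a/(k:ℝ)) v := by
      have hae : ∀ᵐ (v:ℝ) ∂(volume : Measure ℝ), v ≠ 0 := by
        refine ae_iff.mpr ?_
        simpa using measure_singleton (0:ℝ)
      filter_upwards [hae] with v hv
      rcases lt_trichotomy v 0 with hvn | hv0 | hvp
      · simp only [Pi.mul_apply, gammaPDF_of_neg hvn, zero_mul]
        exact zero_le
      · exact absurd hv0 hv
      · simp only [Pi.mul_apply]
        have ht : 0 < Real.sqrt (2*a*v/(k:ℝ)) := Real.sqrt_pos.mpr (by positivity)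
        have hsq : (Real.sqrt (2*a*v/(k:ℝ)))^2 = 2*a*v/(k:ℝ) := Real.sq_sqrt (by positivity)
        have hsetEq : (Prod.mk v ⁻¹' S) = {z : ℝ | (Real.sqrt (2*a*v/(k:ℝ)))^2 ≤ z^2} := by
          rw [hslice v]
          ext z
          simp only [mem_setOf_eq, hsq]
          rw [div_le_iff₀ hk0]
          constructor <;> intro h <;> nlinarith
        have htail := aux_gauss_tail_sq ht
        rw [hsetEq]
        calc gammaPDF ((k:ℝ)/2) (1/2) v * gaussianReal 0 1 {z : ℝ | (Real.sqrt (2*a*v/(k:ℝ)))^2 ≤ z^2}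
            ≤ gammaPDF ((k:ℝ)/2) (1/2) v * ENNReal.ofReal (2 * ((Real.sqrt (2*π))⁻¹ *
                (Real.exp (-(Real.sqrt (2*a*v/(k:ℝ)))^2/2) / Real.sqrt (2*a*v/(k:ℝ))))) := by
              exact mul_le_mul_right htail _
          _ = ENNReal.ofReal (gammaPDFReal ((k:ℝ)/2) (1/2) v * (2 * ((Real.sqrt (2*π))⁻¹ *
                (Real.exp (-(Real.sqrt (2*a*v/(k:ℝ)))^2/2) / Real.sqrt (2*a*v/(k:ℝ)))))) := by
              rw [gammaPDF, ← ENNReal.ofReal_mul (gammaPDFReal_nonneg (by positivity) (by norm_num) v)]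
          _ = ENNReal.ofReal (D * gammaPDFReal (((k:ℝ)-1)/2) ((1/2:ℝ) + a/(k:ℝ)) v) := by
              rw [aux_pointwise hk ha hvp, hD_def]
          _ = ENNReal.ofReal D * gammaPDF (((k:ℝ)-1)/2) ((1/2:ℝ) + a/(k:ℝ)) v := by
              rw [gammaPDF, ← ENNReal.ofReal_mul hDnn]
    calc ∫⁻ v, (gammaPDF ((k:ℝ)/2) (1/2) * fun v => gaussianReal 0 1 (Prod.mk v ⁻¹' S)) v ∂volume
        ≤ ∫⁻ v, ENNReal.ofReal D * gammaPDF (((k:ℝ)-1)/2) ((1/2:ℝ) + a/(k:ℝ)) v ∂volume :=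
          lintegral_mono_ae hbound
      _ = ENNReal.ofReal D * ∫⁻ v, gammaPDF (((k:ℝ)-1)/2) ((1/2:ℝ) + a/(k:ℝ)) v ∂volume :=
          lintegral_const_mul _ hgp2
      _ = ENNReal.ofReal D := by
          rw [lintegral_gammaPDF_eq_one hs hlam, mul_one]
      _ ≤ ENNReal.ofReal (2^((3:ℝ)/2) * Real.exp (-a/2) /
            (Real.sqrt (π*a) * (1 - 1/(k:ℝ)))) := by
          exact ENNReal.ofReal_le_ofReal (aux_final hk ha hak)
  -- union bound
  calc P {ω | 2 * a ≤ (k : ℝ) / V ω * (⨆ j : Fin m, (Z j ω) ^ 2)}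
      ≤ P (⋃ j, Ej j) := measure_mono hsub
    _ ≤ ∑' j : Fin m, P (Ej j) := measure_iUnion_le _
    _ ≤ ∑' j : Fin m, ENNReal.ofReal
        (2^((3:ℝ)/2) * Real.exp (-a/2) / (Real.sqrt (π*a) * (1 - 1/(k:ℝ)))) :=
        ENNReal.tsum_le_tsum hperj
    _ = (m : ℝ≥0∞) * ENNReal.ofReal
        (2^((3:ℝ)/2) * Real.exp (-a/2) / (Real.sqrt (π*a) * (1 - 1/(k:ℝ)))) := by
        rw [tsum_fintype]
        simp [Finset.sum_const, Finset.card_univ]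
    _ = ENNReal.ofReal (2 ^ ((3 : ℝ) / 2) * m * Real.exp (-a / 2) /
        (Real.sqrt (π * a) * (1 - 1 / (k : ℝ)))) := by
        rw [← ENNReal.ofReal_natCast m, ← ENNReal.ofReal_mul (by positivity)]
        congr 1
        ring
end

section
/- Let n, m be positive integers with m < n, let X be an n×p real matrix and X_M an n×m real matrix with X_MᵀX_M invertible; set H := X_M(X_MᵀX_M)⁻¹X_Mᵀ and Λ := tr((HX)ᵀ(HX)), and assume Λ > 0. Let σ > 0, ε > 0, μ ∈ ℝ^m, let L be an m×m real matrix with LLᵀ = (X_MᵀX_M)⁻¹, let Z be a standard Gaussian vector in ℝ^m, and define β̂ := μ + σ·L·Z (so β̂ has the N(μ, σ²(X_MᵀX_M)⁻¹) distribution). Then P( (1/2)·‖Xᵀ X_M (β̂ − μ)‖₂² ≥ ε/9 ) ≤ (3·m·σ·√Λ / √(πε)) · e^{−ε/(9σ²Λ)}. -/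
open MeasureTheory ProbabilityTheory Real Matrix Filter
open scoped NNReal ENNReal

section AuxiliaryLemmas
lemma gaussianPDFReal_conv (v w : ℝ≥0) (hv : v ≠ 0) (hw : w ≠ 0) (y : ℝ) :
    ∫ x : ℝ, gaussianPDFReal 0 v x * gaussianPDFReal 0 w (y - x)
      = gaussianPDFReal 0 (v + w) y := by
  have hv' : (0:ℝ) < v := by exact_mod_cast pos_iff_ne_zero.mpr hv
  have hw' : (0:ℝ) < w := by exact_mod_cast pos_iff_ne_zero.mpr hw
  have hπ := Real.pi_pos
  set b : ℝ := ((v:ℝ) + w) / (2 * v * w) with hb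
  have hb' : 0 < b := by positivity
  set c : ℝ := (v:ℝ) * y / ((v:ℝ) + w) with hc
  set K : ℝ := (√(2*π*v))⁻¹ * (√(2*π*w))⁻¹ * rexp (-y^2/(2*((v:ℝ)+w))) with hK
  have hpt : ∀ x : ℝ, gaussianPDFReal 0 v x * gaussianPDFReal 0 w (y - x)
      = K * rexp (-b * (x - c)^2) := by
    intro x
    have hexp : -x^2/(2*(v:ℝ)) + (-(y - x)^2/(2*(w:ℝ)))
        = -y^2/(2*((v:ℝ)+w)) + (-b * (x - c)^2) := by
      rw [hb, hc]; field_simp; ring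
    simp only [gaussianPDFReal, sub_zero, hK]
    rw [mul_mul_mul_comm, ← Real.exp_add, hexp, Real.exp_add]; ring
  rw [integral_congr_ae (Filter.Eventually.of_forall hpt), integral_const_mul]
  have hgauss : ∫ x : ℝ, rexp (-b * (x - c)^2) = √(π / b) := by
    rw [integral_sub_right_eq_self (fun x => rexp (-b * x^2)) c, integral_gaussian]
  rw [hgauss]
  have hcoe : ((v + w : ℝ≥0) : ℝ) = (v:ℝ) + w := by push_cast; ring
  have hconst : (√(2*π*v))⁻¹ * (√(2*π*w))⁻¹ * √(π/b) = (√(2*π*((v:ℝ)+w)))⁻¹ := by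
    rw [← Real.sqrt_inv (2*π*v), ← Real.sqrt_inv (2*π*w),
      ← Real.sqrt_mul (by positivity : (0:ℝ) ≤ (2*π*(v:ℝ))⁻¹),
      ← Real.sqrt_mul (by positivity : (0:ℝ) ≤ (2*π*(v:ℝ))⁻¹ * (2*π*(w:ℝ))⁻¹),
      ← Real.sqrt_inv (2*π*((v:ℝ)+w))]
    congr 1
    rw [hb]; field_simp
  simp only [gaussianPDFReal, sub_zero, hK, hcoe]
  rw [← hconst]; ring

lemma gaussianPDF_conv (v w : ℝ≥0) (hv : v ≠ 0) (hw : w ≠ 0) (y : ℝ) :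
    ∫⁻ x : ℝ, gaussianPDF 0 v x * gaussianPDF 0 w (y - x) = gaussianPDF 0 (v + w) y := by
  have hπ := Real.pi_pos
  have hw' : (0:ℝ) < w := by exact_mod_cast pos_iff_ne_zero.mpr hw
  have hint : Integrable (fun x : ℝ => gaussianPDFReal 0 v x * gaussianPDFReal 0 w (y - x)) := by
    have : Integrable (fun x : ℝ => gaussianPDFReal 0 w (y - x) * gaussianPDFReal 0 v x) := by
      apply Integrable.bdd_mul (c := (√(2*π*w))⁻¹) (integrable_gaussianPDFReal 0 v)
      · exact ((measurable_gaussianPDFReal 0 w).comp (measurable_const.sub measurable_id)).aestronglyMeasurable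
      · refine Filter.Eventually.of_forall (fun x => ?_)
        rw [Real.norm_eq_abs, abs_of_nonneg (gaussianPDFReal_nonneg 0 w _)]
        unfold gaussianPDFReal
        have h1 : rexp (-(y - x - 0)^2/(2*(w:ℝ))) ≤ 1 := by
          apply Real.exp_le_one_iff.mpr
          apply div_nonpos_of_nonpos_of_nonneg (neg_nonpos.mpr (sq_nonneg _)) (by positivity)
        calc (√(2*π*w))⁻¹ * rexp (-(y - x - 0)^2/(2*(w:ℝ)))
            ≤ (√(2*π*w))⁻¹ * 1 := by
              apply mul_le_mul_of_nonneg_left h1 (by positivity)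
          _ = (√(2*π*w))⁻¹ := mul_one _
    simpa [mul_comm] using this
  simp only [gaussianPDF]
  calc ∫⁻ x : ℝ, ENNReal.ofReal (gaussianPDFReal 0 v x) * ENNReal.ofReal (gaussianPDFReal 0 w (y - x))
      = ∫⁻ x : ℝ, ENNReal.ofReal (gaussianPDFReal 0 v x * gaussianPDFReal 0 w (y - x)) := by
        congr 1; ext x
        rw [ENNReal.ofReal_mul (gaussianPDFReal_nonneg 0 v x)]
    _ = ENNReal.ofReal (∫ x : ℝ, gaussianPDFReal 0 v x * gaussianPDFReal 0 w (y - x)) := by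
        rw [ofReal_integral_eq_lintegral_ofReal hint]
        exact Filter.Eventually.of_forall fun x =>
          mul_nonneg (gaussianPDFReal_nonneg 0 v x) (gaussianPDFReal_nonneg 0 w _)
    _ = ENNReal.ofReal (gaussianPDFReal 0 (v + w) y) := by rw [gaussianPDFReal_conv v w hv hw y]

lemma gaussianReal_map_add (v w : ℝ≥0) :
    Measure.map (fun p : ℝ × ℝ => p.1 + p.2) ((gaussianReal 0 v).prod (gaussianReal 0 w))
      = gaussianReal 0 (v + w) := by
  by_cases hv : v = 0
  · subst hv
    rw [gaussianReal_zero_var, Measure.dirac_prod, Measure.map_map (by fun_prop) (by fun_prop)]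
    have h : ((fun p : ℝ × ℝ => p.1 + p.2) ∘ Prod.mk (0:ℝ)) = id := by ext x; simp
    rw [h, Measure.map_id, zero_add]
  by_cases hw : w = 0
  · subst hw
    rw [gaussianReal_zero_var, Measure.prod_dirac, Measure.map_map (by fun_prop) (by fun_prop)]
    have h : ((fun p : ℝ × ℝ => p.1 + p.2) ∘ (fun x : ℝ => (x, (0:ℝ)))) = id := by ext x; simp
    rw [h, Measure.map_id, add_zero]
  have hvw : v + w ≠ 0 := by simp [hv, hw]
  have hmv := measurable_gaussianPDF 0 v
  have hmw := measurable_gaussianPDF 0 w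
  ext s hs
  rw [Measure.map_apply (by fun_prop) hs, Measure.prod_apply (hs.preimage (by fun_prop))]
  -- rewrite inner measure as a lintegral of an indicator
  have hind : ∀ x : ℝ, (gaussianReal 0 w) (Prod.mk x ⁻¹' ((fun p : ℝ × ℝ => p.1 + p.2) ⁻¹' s))
      = ∫⁻ y : ℝ, s.indicator (fun _ => (1:ℝ≥0∞)) (x + y) * gaussianPDF 0 w y := by
    intro x
    have hset : Prod.mk x ⁻¹' ((fun p : ℝ × ℝ => p.1 + p.2) ⁻¹' s) = (fun y => x + y) ⁻¹' s := rfl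
    rw [hset, gaussianReal_of_var_ne_zero 0 hw,
      withDensity_apply _ ((measurable_const_add x) hs),
      ← lintegral_indicator ((measurable_const_add x) hs) _]
    congr 1; ext y
    by_cases h : x + y ∈ s <;> simp [Set.indicator, h]
  simp_rw [hind]
  rw [gaussianReal_of_var_ne_zero 0 hv,
    lintegral_withDensity_eq_lintegral_mul _ hmv
      (Measurable.lintegral_prod_right'
        (f := fun p : ℝ × ℝ => s.indicator (fun _ => (1:ℝ≥0∞)) (p.1 + p.2) * gaussianPDF 0 w p.2)
        (((measurable_const.indicator hs).comp (measurable_fst.add measurable_snd)).mul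
          (hmw.comp measurable_snd)))]
  simp only [Pi.mul_apply]
  -- push the density inside, translate, and apply Tonelli
  have hshift : ∀ x : ℝ, (gaussianPDF 0 v x) * ∫⁻ y : ℝ, s.indicator (fun _ => (1:ℝ≥0∞)) (x + y) * gaussianPDF 0 w y
      = ∫⁻ y : ℝ, s.indicator (fun _ => (1:ℝ≥0∞)) y * (gaussianPDF 0 v x * gaussianPDF 0 w (y - x)) := by
    intro x
    rw [← lintegral_const_mul (f := fun y : ℝ => s.indicator (fun _ => (1:ℝ≥0∞)) (x + y) * gaussianPDF 0 w y)
      (gaussianPDF 0 v x) (((measurable_const.indicator hs).comp (measurable_const_add x)).mul hmw)]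
    have := lintegral_add_right_eq_self (μ := (volume : Measure ℝ))
      (fun y : ℝ => s.indicator (fun _ => (1:ℝ≥0∞)) y * (gaussianPDF 0 v x * gaussianPDF 0 w (y - x))) x
    rw [← this]
    congr 1; ext y
    simp only [add_sub_cancel_right]
    rw [add_comm y x]; ring
  simp_rw [hshift]
  rw [lintegral_lintegral_swap]
  · have hinner : ∀ y : ℝ, ∫⁻ x : ℝ, s.indicator (fun _ => (1:ℝ≥0∞)) y * (gaussianPDF 0 v x * gaussianPDF 0 w (y - x))
        = s.indicator (fun _ => (1:ℝ≥0∞)) y * gaussianPDF 0 (v + w) y := by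
      intro y
      rw [lintegral_const_mul (f := fun x : ℝ => gaussianPDF 0 v x * gaussianPDF 0 w (y - x))
        _ (hmv.mul (hmw.comp (measurable_const.sub measurable_id))), gaussianPDF_conv v w hv hw y]
    simp_rw [hinner]
    rw [gaussianReal_of_var_ne_zero 0 hvw, withDensity_apply _ hs, ← lintegral_indicator hs _]
    congr 1; ext y
    by_cases h : y ∈ s <;> simp [Set.indicator, h]
  · apply Measurable.aemeasurable
    have : Measurable (fun p : ℝ × ℝ => s.indicator (fun _ => (1:ℝ≥0∞)) p.2 *
        (gaussianPDF 0 v p.1 * gaussianPDF 0 w (p.2 - p.1))) :=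
      ((measurable_const.indicator hs).comp measurable_snd).mul
        ((hmv.comp measurable_fst).mul (hmw.comp (measurable_snd.sub measurable_fst)))
    exact this

lemma indepFun_gaussian_add {Ω : Type*} [MeasurableSpace Ω] {P : Measure Ω}
    [IsProbabilityMeasure P] {X Y : Ω → ℝ} (hX : Measurable X) (hY : Measurable Y)
    (h : IndepFun X Y P) {v w : ℝ≥0} (hmX : Measure.map X P = gaussianReal 0 v)
    (hmY : Measure.map Y P = gaussianReal 0 w) :
    Measure.map (X + Y) P = gaussianReal 0 (v + w) := by
  have hpair := (indepFun_iff_map_prod_eq_prod_map_map hX.aemeasurable hY.aemeasurable).mp h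
  have hcomp : (X + Y) = (fun p : ℝ × ℝ => p.1 + p.2) ∘ (fun ω => (X ω, Y ω)) := rfl
  rw [hcomp, ← Measure.map_map (by fun_prop) (hX.prodMk hY), hpair, hmX, hmY,
    gaussianReal_map_add]

lemma map_sum_gaussian {Ω : Type*} [MeasurableSpace Ω] {P : Measure Ω}
    [IsProbabilityMeasure P] {ι : Type*} (Z : ι → Ω → ℝ)
    (hZmeas : ∀ j, Measurable (Z j))
    (hZ : ∀ j, Measure.map (Z j) P = gaussianReal 0 1)
    (hindep : iIndepFun Z P)
    (c : ι → ℝ) (s : Finset ι) :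
    Measure.map (fun ω => ∑ j ∈ s, c j * Z j ω) P
      = gaussianReal 0 (∑ j ∈ s, ‖c j‖₊ ^ 2) := by
  classical
  have hf : iIndepFun (fun j (ω : Ω) => c j * Z j ω) P :=
    hindep.comp (fun j x => c j * x) (fun j => measurable_const_mul _)
  have hfmeas : ∀ j, Measurable (fun ω => c j * Z j ω) :=
    fun j => (hZmeas j).const_mul _
  have hfmap : ∀ j, Measure.map (fun ω => c j * Z j ω) P = gaussianReal 0 (‖c j‖₊ ^ 2) := by
    intro j
    have : (fun ω => c j * Z j ω) = (c j * ·) ∘ Z j := rfl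
    rw [this, ← Measure.map_map (measurable_const_mul _) (hZmeas j), hZ j,
      gaussianReal_map_const_mul]
    congr 1
    · ring
    · ext
      push_cast
      rw [mul_one]
      exact (sq_abs _).symm
  induction s using Finset.cons_induction with
  | empty =>
      simp only [Finset.sum_empty]
      rw [show (fun _ : Ω => (0:ℝ)) = (fun _ => 0) from rfl, Measure.map_const,
        measure_univ, one_smul, gaussianReal_zero_var]
  | cons j s hj ih =>
      have hsum : (fun ω => ∑ k ∈ Finset.cons j s hj, c k * Z k ω)
          = (fun ω => c j * Z j ω) + (fun ω => ∑ k ∈ s, c k * Z k ω) := by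
        ext ω; rw [Finset.sum_cons]; rfl
      have hS : (fun ω => ∑ k ∈ s, c k * Z k ω) = ∑ k ∈ s, (fun ω => c k * Z k ω) := by
        ext ω; simp
      have hindep2 : IndepFun (fun ω => c j * Z j ω) (fun ω => ∑ k ∈ s, c k * Z k ω) P := by
        rw [hS]
        exact (hf.indepFun_finsetSum_of_notMem hfmeas hj).symm
      have hmeas2 : Measurable (fun ω => ∑ k ∈ s, c k * Z k ω) := by
        exact Finset.measurable_sum s (fun k _ => hfmeas k)
      rw [hsum, Finset.sum_cons,
        indepFun_gaussian_add (hfmeas j) hmeas2 hindep2 (hfmap j) ih]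

lemma deriv_negexp (x : ℝ) : HasDerivAt (fun x : ℝ => -rexp (-x^2/2)) (x * rexp (-x^2/2)) x := by
  have h1 : HasDerivAt (fun x : ℝ => -x^2/2) (-x) x := by
    have h := ((hasDerivAt_pow 2 x).div_const 2).fun_neg
    have he : (fun y : ℝ => -(y^2/2)) = (fun y : ℝ => -y^2/2) := by funext y; ring
    rw [he] at h
    refine h.congr_deriv ?_
    push_cast
    ring
  have h2 := (h1.exp).fun_neg
  refine h2.congr_deriv ?_
  ring

lemma exp_tendsto_zero : Tendsto (fun x : ℝ => -rexp (-x^2/2)) atTop (nhds 0) := by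
  have h1 : Tendsto (fun x : ℝ => x^2/2) atTop atTop :=
    (tendsto_pow_atTop two_ne_zero).atTop_div_const (by norm_num)
  have h2 : Tendsto (fun x : ℝ => rexp (-(x^2/2))) atTop (nhds 0) :=
    (tendsto_exp_neg_atTop_nhds_zero).comp h1
  have h3 : Tendsto (fun x : ℝ => rexp (-x^2/2)) atTop (nhds 0) := by
    convert h2 using 2 with x
    ring_nf
  simpa using h3.neg

lemma xexp_integrableOn (a : ℝ) (ha : 0 < a) :
    IntegrableOn (fun x : ℝ => x * rexp (-x^2/2)) (Set.Ioi a) := by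
  apply integrableOn_Ioi_deriv_of_nonneg ((deriv_negexp a).continuousAt.continuousWithinAt)
    (fun x _ => deriv_negexp x)
  · intro x hx
    have : (0:ℝ) < x := lt_trans ha hx
    positivity
  · exact exp_tendsto_zero

lemma xexp_integral (a : ℝ) (ha : 0 < a) :
    ∫ x in Set.Ioi a, x * rexp (-x^2/2) = rexp (-a^2/2) := by
  rw [integral_Ioi_of_hasDerivAt_of_tendsto ((deriv_negexp a).continuousAt.continuousWithinAt)
    (fun x _ => deriv_negexp x) (xexp_integrableOn a ha) exp_tendsto_zero]
  simp

lemma gaussianReal_Ici_le (a : ℝ) (ha : 0 < a) :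
    gaussianReal 0 1 (Set.Ici a) ≤ ENNReal.ofReal ((√(2*π))⁻¹ / a * rexp (-a^2/2)) := by
  have hπ := Real.pi_pos
  rw [gaussianReal_apply 0 one_ne_zero (Set.Ici a)]
  have hpt : ∀ x ∈ Set.Ici a, gaussianPDF 0 1 x
      ≤ ENNReal.ofReal ((√(2*π))⁻¹ / a * (x * rexp (-x^2/2))) := by
    intro x hx
    have hax : a ≤ x := hx
    have hx0 : 0 < x := lt_of_lt_of_le ha hax
    rw [gaussianPDF]
    apply ENNReal.ofReal_le_ofReal
    have hpdf : gaussianPDFReal 0 1 x = (√(2*π))⁻¹ * rexp (-x^2/2) := by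
      simp [gaussianPDFReal]
    rw [hpdf]
    calc (√(2*π))⁻¹ * rexp (-x^2/2) = 1 * ((√(2*π))⁻¹ * rexp (-x^2/2)) := by ring
      _ ≤ (x/a) * ((√(2*π))⁻¹ * rexp (-x^2/2)) := by
          apply mul_le_mul_of_nonneg_right ((one_le_div ha).mpr hax) (by positivity)
      _ = (√(2*π))⁻¹ / a * (x * rexp (-x^2/2)) := by ring
  calc ∫⁻ x in Set.Ici a, gaussianPDF 0 1 x
      ≤ ∫⁻ x in Set.Ici a, ENNReal.ofReal ((√(2*π))⁻¹ / a * (x * rexp (-x^2/2))) :=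
        setLIntegral_mono (by fun_prop) hpt
    _ = ENNReal.ofReal (∫ x in Set.Ici a, (√(2*π))⁻¹ / a * (x * rexp (-x^2/2))) := by
        rw [ofReal_integral_eq_lintegral_ofReal]
        · exact ((integrableOn_Ici_iff_integrableOn_Ioi).mpr (xexp_integrableOn a ha)).const_mul _
        · apply (ae_restrict_iff' measurableSet_Ici).mpr
          apply Filter.Eventually.of_forall
          intro x hx
          have hx0 : 0 < x := lt_of_lt_of_le ha hx
          positivity
    _ = ENNReal.ofReal ((√(2*π))⁻¹ / a * rexp (-a^2/2)) := by
        rw [integral_const_mul, integral_Ici_eq_integral_Ioi, xexp_integral a ha]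

lemma gaussianReal_abs_tail (a : ℝ) (ha : 0 < a) :
    gaussianReal 0 1 {x : ℝ | a ≤ |x|}
      ≤ ENNReal.ofReal (2 * ((√(2*π))⁻¹ / a) * rexp (-a^2/2)) := by
  have hπ := Real.pi_pos
  have hsub : {x : ℝ | a ≤ |x|} ⊆ Set.Iic (-a) ∪ Set.Ici a := by
    intro x hx
    rcases le_abs.mp (Set.mem_setOf.mp hx) with h | h
    · exact Or.inr (Set.mem_Ici.mpr h)
    · exact Or.inl (Set.mem_Iic.mpr (by linarith))
  have hneg : Measure.map (fun x : ℝ => -x) (gaussianReal 0 1) = gaussianReal 0 1 := by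
    have h := gaussianReal_map_const_mul (μ := 0) (v := 1) (-1)
    simp only [neg_one_mul, neg_zero] at h
    convert h using 2
    ext
    push_cast
    norm_num
  have hIic : gaussianReal 0 1 (Set.Iic (-a)) = gaussianReal 0 1 (Set.Ici a) := by
    conv_lhs => rw [← hneg]
    rw [Measure.map_apply measurable_neg measurableSet_Iic]
    congr 1
    ext x
    simp
  calc gaussianReal 0 1 {x : ℝ | a ≤ |x|}
      ≤ gaussianReal 0 1 (Set.Iic (-a) ∪ Set.Ici a) := measure_mono hsub
    _ ≤ gaussianReal 0 1 (Set.Iic (-a)) + gaussianReal 0 1 (Set.Ici a) := measure_union_le _ _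
    _ = gaussianReal 0 1 (Set.Ici a) + gaussianReal 0 1 (Set.Ici a) := by rw [hIic]
    _ ≤ ENNReal.ofReal ((√(2*π))⁻¹ / a * rexp (-a^2/2))
        + ENNReal.ofReal ((√(2*π))⁻¹ / a * rexp (-a^2/2)) :=
          add_le_add (gaussianReal_Ici_le a ha) (gaussianReal_Ici_le a ha)
    _ = ENNReal.ofReal (2 * ((√(2*π))⁻¹ / a) * rexp (-a^2/2)) := by
        rw [← ENNReal.ofReal_add (by positivity) (by positivity)]
        congr 1
        ring

end AuxiliaryLemmas

/-- Lemma 2 of Williams–Hannig. Concentration of the least squares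
estimator `β̂ = μ + σ·L·Z ~ N(μ, σ²(X_MᵀX_M)⁻¹)` around its mean `μ`. -/
theorem least_squares_concentration
    {Ω : Type*} [MeasurableSpace Ω] (P : Measure Ω) [IsProbabilityMeasure P]
    (n m p : ℕ) (hm : 0 < m) (hmn : m < n)
    (X : Matrix (Fin n) (Fin p) ℝ) (XM : Matrix (Fin n) (Fin m) ℝ)
    (hXM : IsUnit (XMᵀ * XM).det)
    (H : Matrix (Fin n) (Fin n) ℝ) (hH : H = XM * (XMᵀ * XM)⁻¹ * XMᵀ)
    (Λ : ℝ) (hΛdef : Λ = Matrix.trace ((H * X)ᵀ * (H * X))) (hΛ : 0 < Λ)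
    (σ : ℝ) (hσ : 0 < σ) (ε : ℝ) (hε : 0 < ε) (μ : Fin m → ℝ)
    (L : Matrix (Fin m) (Fin m) ℝ) (hL : L * Lᵀ = (XMᵀ * XM)⁻¹)
    (Z : Fin m → Ω → ℝ)
    (hZmeas : ∀ j, Measurable (Z j))
    (hZ : ∀ j, Measure.map (Z j) P = gaussianReal 0 1)
    (hindep : iIndepFun Z P)
    (βhat : Ω → Fin m → ℝ)
    (hβhat : ∀ ω, βhat ω = μ + σ • (L *ᵥ fun j => Z j ω)) :
    P {ω | ε / 9 ≤ 1 / 2 * ∑ i, (Xᵀ *ᵥ (XM *ᵥ (βhat ω - μ))) i ^ 2} ≤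
      ENNReal.ofReal (3 * m * σ * Real.sqrt Λ / Real.sqrt (π * ε) *
        Real.exp (-ε / (9 * σ ^ 2 * Λ))) := by
  have hπ := Real.pi_pos
  set aa : ℝ := Real.sqrt (2*ε/(9*(σ^2*Λ))) with haa_def
  have haa : 0 < aa := Real.sqrt_pos.mpr (by positivity)
  have haa2 : aa^2 = 2*ε/(9*(σ^2*Λ)) := Real.sq_sqrt (by positivity)
  set B : Matrix (Fin p) (Fin m) ℝ := Xᵀ * XM * L with hB
  -- the matrix BᵀB is positive semidefinite
  have hMpsd : (Bᵀ * B).PosSemidef := by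
    have h := Matrix.posSemidef_conjTranspose_mul_self B
    convert h using 2
    exact (Matrix.conjTranspose_eq_transpose_of_trivial B).symm
  have herm : (Bᵀ * B).IsHermitian := hMpsd.isHermitian
  set g : Fin m → ℝ := herm.eigenvalues with hg
  set U : Matrix (Fin m) (Fin m) ℝ := (herm.eigenvectorUnitary : Matrix (Fin m) (Fin m) ℝ)
    with hU
  have hUstar : star U * U = 1 := Unitary.coe_star_mul_self herm.eigenvectorUnitary
  have hUstar' : U * star U = 1 := Unitary.coe_mul_star_self herm.eigenvectorUnitary
  have hdiag : star U * (Bᵀ * B) * U = Matrix.diagonal g := by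
    have h := herm.conjStarAlgAut_star_eigenvectorUnitary
    rw [Unitary.conjStarAlgAut_apply] at h
    simp only [Unitary.coe_star, star_star] at h
    have h2 : (RCLike.ofReal ∘ herm.eigenvalues : Fin m → ℝ) = g := by
      funext i; simp [hg]
    rw [h2] at h
    exact h
  have hspec : Bᵀ * B = U * Matrix.diagonal g * star U := by
    calc Bᵀ * B = 1 * (Bᵀ * B) * 1 := by rw [one_mul, mul_one]
      _ = (U * star U) * (Bᵀ * B) * (U * star U) := by rw [hUstar']
      _ = U * (star U * (Bᵀ * B) * U) * star U := by simp only [Matrix.mul_assoc]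
      _ = U * Matrix.diagonal g * star U := by rw [hdiag]
  -- trace computation
  have hGsymm : ((XMᵀ * XM)⁻¹)ᵀ = (XMᵀ * XM)⁻¹ := by
    rw [Matrix.transpose_nonsing_inv,
      show (XMᵀ * XM)ᵀ = XMᵀ * XM by rw [Matrix.transpose_mul, Matrix.transpose_transpose]]
  have e1 : B * Bᵀ = Xᵀ * XM * (L * Lᵀ) * (XMᵀ * X) := by
    simp only [hB, Matrix.transpose_mul, Matrix.transpose_transpose, Matrix.mul_assoc]
  have e2 : (H * X)ᵀ * (H * X)
      = Xᵀ * XM * ((XMᵀ * XM)⁻¹ * ((XMᵀ * XM) * (XMᵀ * XM)⁻¹)) * (XMᵀ * X) := by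
    simp only [hH, Matrix.transpose_mul, Matrix.transpose_transpose, hGsymm, Matrix.mul_assoc]
  have e3 : (XMᵀ * XM)⁻¹ * ((XMᵀ * XM) * (XMᵀ * XM)⁻¹) = L * Lᵀ := by
    rw [Matrix.mul_nonsing_inv _ hXM, Matrix.mul_one, hL]
  have htrB : Matrix.trace (Bᵀ * B) = Λ := by
    rw [Matrix.trace_mul_comm, e1, ← e3, ← e2, ← hΛdef]
  have htrace : ∑ i, g i = Λ := by
    have h1 : Matrix.trace (Bᵀ * B) = Matrix.trace (Matrix.diagonal g) := by
      rw [hspec, Matrix.trace_mul_cycle, hUstar, Matrix.one_mul]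
    rw [← htrB, h1, Matrix.trace_diagonal]
  -- quadratic form identity
  have hq1 : ∀ z : Fin m → ℝ, ∑ i, ((B *ᵥ z) i)^2 = z ⬝ᵥ ((Bᵀ * B) *ᵥ z) := by
    intro z
    conv_rhs => rw [← Matrix.mulVec_mulVec]
    rw [Matrix.dotProduct_mulVec, Matrix.vecMul_transpose]
    simp [dotProduct, pow_two]
  have hq2 : ∀ z : Fin m → ℝ, z ⬝ᵥ ((Bᵀ * B) *ᵥ z) = ∑ i, g i * ((star U *ᵥ z) i)^2 := by
    intro z
    rw [hspec, ← Matrix.mulVec_mulVec, ← Matrix.mulVec_mulVec, Matrix.dotProduct_mulVec]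
    have hy : z ᵥ* U = star U *ᵥ z := by
      ext k
      simp [Matrix.vecMul, Matrix.mulVec, dotProduct, Matrix.star_apply, mul_comm]
    rw [hy, dotProduct]
    apply Finset.sum_congr rfl
    intro i _
    rw [Matrix.mulVec_diagonal]
    ring
  set Y : Fin m → Ω → ℝ := fun i ω => ∑ j, U j i * Z j ω with hY
  have hYdef : ∀ (z : Fin m → ℝ) i, (star U *ᵥ z) i = ∑ j, U j i * z j := by
    intro z i
    simp [Matrix.mulVec, dotProduct, Matrix.star_apply]
  have hYmeas : ∀ i, Measurable (Y i) :=
    fun i => Finset.measurable_sum _ (fun j _ => (hZmeas j).const_mul _)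
  have hYmap : ∀ i, Measure.map (Y i) P = gaussianReal 0 1 := by
    intro i
    have hcol : (∑ j, ‖U j i‖₊ ^ 2) = 1 := by
      have h1 : (star U * U) i i = 1 := by rw [hUstar]; simp [Matrix.one_apply]
      rw [Matrix.mul_apply] at h1
      apply NNReal.coe_injective
      push_cast
      rw [← h1]
      apply Finset.sum_congr rfl
      intro j _
      simp only [Real.norm_eq_abs, sq_abs, Matrix.star_apply, star_trivial]
      ring
    rw [hY, map_sum_gaussian Z hZmeas hZ hindep (fun j => U j i) Finset.univ, hcol]
  -- event inclusion
  have hgnonneg : ∀ i, 0 ≤ g i := hMpsd.eigenvalues_nonneg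
  have hincl : {ω | ε / 9 ≤ 1 / 2 * ∑ i, (Xᵀ *ᵥ (XM *ᵥ (βhat ω - μ))) i ^ 2}
      ⊆ ⋃ i, {ω | aa ≤ |Y i ω|} := by
    intro ω hω
    simp only [Set.mem_setOf_eq] at hω
    set z : Fin m → ℝ := fun j => Z j ω with hz
    have hvec : (Xᵀ *ᵥ (XM *ᵥ (βhat ω - μ))) = σ • (B *ᵥ z) := by
      rw [hβhat ω, add_sub_cancel_left, Matrix.mulVec_smul, Matrix.mulVec_smul,
        Matrix.mulVec_mulVec, Matrix.mulVec_mulVec, hB, Matrix.mul_assoc]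
    have hsum : ∑ i, (Xᵀ *ᵥ (XM *ᵥ (βhat ω - μ))) i ^ 2
        = σ^2 * ∑ i, g i * (Y i ω)^2 := by
      rw [hvec]
      have : ∀ i, ((σ • (B *ᵥ z)) i)^2 = σ^2 * ((B *ᵥ z) i)^2 := by
        intro i; simp [Pi.smul_apply, smul_eq_mul]; ring
      rw [Finset.sum_congr rfl (fun i _ => this i), ← Finset.mul_sum, hq1, hq2]
      congr 1
    rw [hsum] at hω
    rw [Set.mem_iUnion]
    by_contra hcon
    push_neg at hcon
    simp only [Set.mem_setOf_eq, not_le] at hcon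
    have hib : ∀ i ∈ Finset.univ, g i * (Y i ω)^2 ≤ g i * aa^2 := by
      intro i _
      apply mul_le_mul_of_nonneg_left _ (hgnonneg i)
      rw [← sq_abs]
      exact pow_le_pow_left₀ (abs_nonneg _) (hcon i).le 2
    have hex : ∃ i ∈ Finset.univ, g i * (Y i ω)^2 < g i * aa^2 := by
      obtain ⟨i0, hi0⟩ : ∃ i, 0 < g i := by
        by_contra hneg
        push_neg at hneg
        have hle : ∑ i, g i ≤ 0 := Finset.sum_nonpos (fun i _ => hneg i)
        rw [htrace] at hle
        linarith
      refine ⟨i0, Finset.mem_univ _, mul_lt_mul_of_pos_left ?_ hi0⟩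
      rw [← sq_abs]
      exact pow_lt_pow_left₀ (hcon i0) (abs_nonneg _) two_ne_zero
    have hlt := Finset.sum_lt_sum hib hex
    have hsum_aa : ∑ i : Fin m, g i * aa^2 = Λ * aa^2 := by
      rw [← Finset.sum_mul, htrace]
    rw [hsum_aa] at hlt
    have hval : Λ * aa^2 = 2*ε/(9*σ^2) := by
      rw [haa2]; field_simp
    rw [hval] at hlt
    have : σ^2 * ∑ i, g i * (Y i ω)^2 < σ^2 * (2*ε/(9*σ^2)) :=
      mul_lt_mul_of_pos_left hlt (by positivity)
    have h2 : σ^2 * (2*ε/(9*σ^2)) = 2*ε/9 := by field_simp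
    rw [h2] at this
    linarith
  -- final assembly
  have habs_meas : MeasurableSet {x : ℝ | aa ≤ |x|} :=
    measurableSet_le measurable_const measurable_id.abs
  calc P {ω | ε / 9 ≤ 1 / 2 * ∑ i, (Xᵀ *ᵥ (XM *ᵥ (βhat ω - μ))) i ^ 2}
      ≤ P (⋃ i, {ω | aa ≤ |Y i ω|}) := measure_mono hincl
    _ ≤ ∑' i, P {ω | aa ≤ |Y i ω|} := measure_iUnion_le _
    _ = ∑ i, P {ω | aa ≤ |Y i ω|} := tsum_fintype _
    _ ≤ ∑ _i : Fin m, ENNReal.ofReal (2 * ((√(2*π))⁻¹ / aa) * rexp (-aa^2/2)) := by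
        apply Finset.sum_le_sum
        intro i _
        have hpre : {ω | aa ≤ |Y i ω|} = Y i ⁻¹' {x | aa ≤ |x|} := rfl
        rw [hpre, ← Measure.map_apply (hYmeas i) habs_meas, hYmap i]
        exact gaussianReal_abs_tail aa haa
    _ = ENNReal.ofReal (3 * m * σ * Real.sqrt Λ / Real.sqrt (π * ε) *
        Real.exp (-ε / (9 * σ ^ 2 * Λ))) := by
        rw [Finset.sum_const, Finset.card_univ, Fintype.card_fin, nsmul_eq_mul,
          ← ENNReal.ofReal_natCast m, ← ENNReal.ofReal_mul (by positivity)]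
        congr 1
        have hexp : -aa^2/2 = -ε/(9*σ^2*Λ) := by
          rw [haa2]; field_simp
        have hcoef : 2 * ((√(2*π))⁻¹ / aa) = 3*σ*√Λ/√(π*ε) := by
          have l2 : 2 * ((√(2*π))⁻¹ / aa) = 2 / (√(2*π) * aa) := by
            field_simp
          have l1 : √(2*π) * aa = √(2*π*(2*ε/(9*(σ^2*Λ)))) := by
            rw [haa_def, ← Real.sqrt_mul (by positivity)]
          have l3 : 3*σ*√Λ = √(9*σ^2*Λ) := by
            rw [show 9*σ^2*Λ = (3*σ)^2*Λ by ring, Real.sqrt_mul (by positivity),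
              Real.sqrt_sq (by positivity)]
          rw [l2, l1, l3, div_eq_div_iff (by positivity) (by positivity),
            ← Real.sqrt_mul (by positivity),
            show (2:ℝ) * √(π*ε) = √(4*(π*ε)) by
              rw [show (4:ℝ)*(π*ε) = 2^2*(π*ε) by ring,
                Real.sqrt_mul (by positivity : (0:ℝ) ≤ 2^2) (π*ε),
                Real.sqrt_sq (by positivity : (0:ℝ) ≤ 2)]]
          congr 1
          field_simp
          ring
        rw [hexp, hcoef]
        ring
end

section
/- Let m ≥ 1 be an integer, let λ₁,…,λ_m be nonnegative real numbers with Λ := λ₁+⋯+λ_m > 0, let t > 0, and let Z₁,…,Z_m be independent standard normal N(0,1) random variables. Then P( Σ_{i=1}^m λ_i Z_i² ≥ t ) ≤ m·√(2Λ/(πt))·e^{−t/(2Λ)}. -/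
open MeasureTheory ProbabilityTheory Real

lemma tail_int {b : ℝ} (hb : 0 < b) :
    ∫ x in Set.Ioi b, x * rexp (-x^2/2) = rexp (-b^2/2) := by
  have hint : IntegrableOn (fun x => x * rexp (-x^2/2)) (Set.Ioi b) := by
    have := (integrable_mul_exp_neg_mul_sq (by norm_num : (0:ℝ) < 1/2)).integrableOn
      (s := Set.Ioi b)
    refine this.congr_fun (fun x _ => ?_) measurableSet_Ioi
    ring_nf
  have hderiv : ∀ x ∈ Set.Ici b, HasDerivAt (fun x => -rexp (-x^2/2)) (x * rexp (-x^2/2)) x := by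
    intro x _
    have h1 : HasDerivAt (fun x : ℝ => -x^2/2) (-x) x := by
      have := ((hasDerivAt_pow 2 x).neg).div_const 2
      simpa using this.congr_deriv (by ring)
    have := (h1.exp).neg
    exact this.congr_deriv (by ring)
  have htend : Filter.Tendsto (fun x : ℝ => -rexp (-x^2/2)) Filter.atTop (nhds 0) := by
    rw [show (0:ℝ) = -0 by ring]
    apply Filter.Tendsto.neg
    apply Real.tendsto_exp_atBot.comp
    apply Filter.Tendsto.atBot_div_const (by norm_num)
    exact Filter.tendsto_neg_atTop_atBot.comp (Filter.tendsto_pow_atTop two_ne_zero)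
  have := integral_Ioi_of_hasDerivAt_of_tendsto' hderiv hint htend
  rw [this]; ring

lemma gauss_Ici {b : ℝ} (hb : 0 < b) :
    gaussianReal 0 1 (Set.Ici b) ≤
      ENNReal.ofReal ((Real.sqrt (2*π))⁻¹ * b⁻¹ * rexp (-b^2/2)) := by
  rw [gaussianReal_apply_eq_integral 0 one_ne_zero]
  apply ENNReal.ofReal_le_ofReal
  have hpdf : ∀ x : ℝ, gaussianPDFReal 0 1 x = (Real.sqrt (2*π))⁻¹ * rexp (-x^2/2) := by
    intro x
    simp [gaussianPDFReal]
  have hint : IntegrableOn (fun x => (Real.sqrt (2*π))⁻¹ * (b⁻¹ * (x * rexp (-x^2/2))))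
      (Set.Ici b) := by
    have := (integrable_mul_exp_neg_mul_sq (by norm_num : (0:ℝ) < 1/2)).integrableOn
      (s := Set.Ici b)
    refine ((this.congr_fun (fun x _ => ?_) measurableSet_Ici).const_mul b⁻¹).const_mul _
    ring_nf
  have hmono : ∫ x in Set.Ici b, gaussianPDFReal 0 1 x ≤
      ∫ x in Set.Ici b, (Real.sqrt (2*π))⁻¹ * (b⁻¹ * (x * rexp (-x^2/2))) := by
    refine setIntegral_mono_on (integrable_gaussianPDFReal 0 1).integrableOn hint
      measurableSet_Ici (fun x hx => ?_)
    rw [hpdf]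
    have hx : b ≤ x := hx
    have h1 : (1:ℝ) ≤ b⁻¹ * x := by
      rw [← inv_mul_cancel₀ hb.ne']
      exact mul_le_mul_of_nonneg_left hx (by positivity)
    calc (Real.sqrt (2*π))⁻¹ * rexp (-x^2/2)
        ≤ (Real.sqrt (2*π))⁻¹ * ((b⁻¹ * x) * rexp (-x^2/2)) := by
          apply mul_le_mul_of_nonneg_left _ (by positivity)
          nlinarith [Real.exp_pos (-x^2/2)]
      _ = (Real.sqrt (2*π))⁻¹ * (b⁻¹ * (x * rexp (-x^2/2))) := by ring
  refine hmono.trans ?_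
  rw [integral_const_mul, integral_const_mul]
  rw [integral_Ici_eq_integral_Ioi, tail_int hb]
  ring_nf
  rfl

lemma gauss_Iic {b : ℝ} (hb : 0 < b) :
    gaussianReal 0 1 (Set.Iic (-b)) = gaussianReal 0 1 (Set.Ici b) := by
  have hmap : (gaussianReal 0 1).map ((-1 : ℝ) * ·) = gaussianReal 0 1 := by
    rw [gaussianReal_map_const_mul (-1 : ℝ)]
    norm_num
  conv_lhs => rw [← hmap]
  rw [Measure.map_apply (measurable_id'.const_mul _) measurableSet_Iic]
  congr 1
  ext x
  simp

lemma gauss_sq_tail {a : ℝ} (ha : 0 < a) :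
    gaussianReal 0 1 {x | a ≤ x^2} ≤
      ENNReal.ofReal (Real.sqrt (2/(π*a)) * rexp (-a/2)) := by
  have hsa : 0 < Real.sqrt a := Real.sqrt_pos.mpr ha
  have hset : {x : ℝ | a ≤ x^2} = Set.Iic (-Real.sqrt a) ∪ Set.Ici (Real.sqrt a) := by
    ext x
    simp only [Set.mem_setOf_eq, Set.mem_union, Set.mem_Iic, Set.mem_Ici]
    have key : a ≤ x^2 ↔ Real.sqrt a ≤ |x| := by
      constructor
      · intro h
        calc Real.sqrt a ≤ Real.sqrt (x^2) := Real.sqrt_le_sqrt h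
          _ = |x| := Real.sqrt_sq_eq_abs x
      · intro h
        calc a = (Real.sqrt a)^2 := (Real.sq_sqrt ha.le).symm
          _ ≤ |x|^2 := by nlinarith [abs_nonneg x]
          _ = x^2 := sq_abs x
    rw [key, le_abs]
    constructor
    · rintro (h | h)
      · right; exact h
      · left; linarith
    · rintro (h | h)
      · right; linarith
      · left; exact h
  rw [hset]
  calc gaussianReal 0 1 (Set.Iic (-Real.sqrt a) ∪ Set.Ici (Real.sqrt a))
      ≤ gaussianReal 0 1 (Set.Iic (-Real.sqrt a)) + gaussianReal 0 1 (Set.Ici (Real.sqrt a)) :=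
        measure_union_le _ _
    _ = 2 * gaussianReal 0 1 (Set.Ici (Real.sqrt a)) := by rw [gauss_Iic hsa]; ring
    _ ≤ 2 * ENNReal.ofReal ((Real.sqrt (2*π))⁻¹ * (Real.sqrt a)⁻¹ * rexp (-(Real.sqrt a)^2/2)) :=
        by exact mul_le_mul_right (gauss_Ici hsa) 2
    _ = ENNReal.ofReal (Real.sqrt (2/(π*a)) * rexp (-a/2)) := by
        rw [Real.sq_sqrt ha.le]
        rw [← ENNReal.ofReal_ofNat, ← ENNReal.ofReal_mul (by norm_num)]
        congr 1
        have h2 : Real.sqrt (2/(π*a)) = 2 * ((Real.sqrt (2*π))⁻¹ * (Real.sqrt a)⁻¹) := by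
          rw [show (2:ℝ)/(π*a) = 2^2 * ((2*π)⁻¹ * a⁻¹) by field_simp,
            Real.sqrt_mul (by positivity), Real.sqrt_mul (by positivity),
            Real.sqrt_inv, Real.sqrt_inv, Real.sqrt_sq (by norm_num)]
        rw [h2]; ring

/-- Tail bound for a nonnegative linear combination of squared
independent standard normals:
`P(Σ λᵢ Zᵢ² ≥ t) ≤ m √(2Λ/(πt)) e^{-t/(2Λ)}` where `Λ = Σ λᵢ > 0`. -/
theorem weighted_chi_square_tail_bound
    {Ω : Type*} [MeasurableSpace Ω] (P : Measure Ω) [IsProbabilityMeasure P]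
    (m : ℕ) (hm : 1 ≤ m)
    (lam : Fin m → ℝ) (hlam : ∀ i, 0 ≤ lam i)
    (Λ : ℝ) (hΛdef : Λ = ∑ i, lam i) (hΛ : 0 < Λ)
    (t : ℝ) (ht : 0 < t)
    (Z : Fin m → Ω → ℝ)
    (hZmeas : ∀ i, Measurable (Z i))
    (hZ : ∀ i, Measure.map (Z i) P = gaussianReal 0 1)
    (hindep : iIndepFun Z P) :
    P {ω | t ≤ ∑ i, lam i * (Z i ω) ^ 2} ≤
      ENNReal.ofReal (m * Real.sqrt (2 * Λ / (π * t)) * Real.exp (-t / (2 * Λ))) := by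
  set a : ℝ := t / Λ with ha_def
  have ha : 0 < a := div_pos ht hΛ
  -- the union bound inclusion
  have hsub : {ω | t ≤ ∑ i, lam i * (Z i ω) ^ 2} ⊆ ⋃ i, {ω | a ≤ (Z i ω) ^ 2} := by
    intro ω hω
    simp only [Set.mem_setOf_eq] at hω
    by_contra h
    simp only [Set.mem_iUnion, Set.mem_setOf_eq, not_exists, not_le] at h
    obtain ⟨i₀, hi₀⟩ : ∃ i, 0 < lam i := by
      by_contra hc
      push_neg at hc
      have : Λ ≤ 0 := by
        rw [hΛdef]
        exact Finset.sum_nonpos (fun i _ => hc i)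
      linarith
    have hlt : ∑ i, lam i * (Z i ω) ^ 2 < ∑ i, lam i * a := by
      apply Finset.sum_lt_sum
      · intro i _
        exact mul_le_mul_of_nonneg_left (h i).le (hlam i)
      · exact ⟨i₀, Finset.mem_univ i₀, by nlinarith [h i₀]⟩
    have : ∑ i, lam i * a = t := by
      rw [← Finset.sum_mul, ← hΛdef, ha_def]
      field_simp
    linarith
  have hmeasset : MeasurableSet {x : ℝ | a ≤ x ^ 2} :=
    measurableSet_le measurable_const (measurable_id.pow_const 2)
  have hterm : ∀ i, P {ω | a ≤ (Z i ω) ^ 2} ≤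
      ENNReal.ofReal (Real.sqrt (2/(π*a)) * rexp (-a/2)) := by
    intro i
    have : P {ω | a ≤ (Z i ω) ^ 2} = (Measure.map (Z i) P) {x | a ≤ x ^ 2} := by
      rw [Measure.map_apply (hZmeas i) hmeasset]
      rfl
    rw [this, hZ i]
    exact gauss_sq_tail ha
  calc P {ω | t ≤ ∑ i, lam i * (Z i ω) ^ 2}
      ≤ P (⋃ i, {ω | a ≤ (Z i ω) ^ 2}) := measure_mono hsub
    _ ≤ ∑ i, P {ω | a ≤ (Z i ω) ^ 2} := measure_iUnion_fintype_le _ _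
    _ ≤ ∑ _i : Fin m, ENNReal.ofReal (Real.sqrt (2/(π*a)) * rexp (-a/2)) :=
        Finset.sum_le_sum (fun i _ => hterm i)
    _ = ENNReal.ofReal (m * Real.sqrt (2 * Λ / (π * t)) * Real.exp (-t / (2 * Λ))) := by
        rw [Finset.sum_const, Finset.card_univ, Fintype.card_fin]
        rw [nsmul_eq_mul, ← ENNReal.ofReal_natCast m, ← ENNReal.ofReal_mul (by positivity)]
        congr 1
        have h1 : (2:ℝ)/(π*a) = 2 * Λ / (π * t) := by
          rw [ha_def]; field_simp
        have h2 : -a/2 = -t/(2*Λ) := by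
          rw [ha_def, neg_div, neg_div, div_div]
          rw [mul_comm]
        rw [h1, h2]
        ring
end

section
/- Let d₁, d₂ ≥ 1 be integers, let a > 1 be a real number, and let V₁ and V₂ be independent chi-square random variables with d₁ and d₂ degrees of freedom respectively. Then P( V₁ > (a−1)·V₂ ) ≤ e^{−(d₂/e²)·(a−1)/4 + d₁/2} + e^{−d₂/2}/√(π·d₂). -/
open MeasureTheory ProbabilityTheory Real Set Filter Topology

/-- Stirling lower bound for factorials. -/
lemma my_stirling_fact (n : ℕ) :
    Real.sqrt π * (Real.sqrt (2 * n) * ((n : ℝ) / Real.exp 1) ^ n) ≤ (n.factorial : ℝ) := by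
  rcases Nat.eq_zero_or_pos n with h | h
  · simp [h]
  have h1 : Real.sqrt π ≤ Stirling.stirlingSeq n := by
    obtain ⟨m, rfl⟩ := Nat.exists_eq_add_of_le h
    have := Stirling.stirlingSeq'_antitone.le_of_tendsto
      (by simpa [Function.comp_def, Filter.tendsto_add_atTop_iff_nat 1]
        using Stirling.tendsto_stirlingSeq_sqrt_pi) m
    simpa [Function.comp, Nat.succ_eq_add_one, add_comm 1 m] using this
  have hpos : 0 < Real.sqrt (2 * n) * ((n : ℝ) / Real.exp 1) ^ n := by
    have : (0:ℝ) < n := by exact_mod_cast h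
    positivity
  calc Real.sqrt π * (Real.sqrt (2 * n) * ((n : ℝ) / Real.exp 1) ^ n)
      ≤ Stirling.stirlingSeq n * (Real.sqrt (2 * n) * ((n : ℝ) / Real.exp 1) ^ n) :=
        mul_le_mul_of_nonneg_right h1 hpos.le
    _ = (n.factorial : ℝ) := by
        rw [Stirling.stirlingSeq]
        field_simp

/-- interpolation: `Γ(n + 1/2 + 1) ≥ n! √(n+1/2)` via log-convexity. -/
lemma my_gamma_interp (n : ℕ) :
    (n.factorial : ℝ) * Real.sqrt ((n : ℝ) + 1/2) ≤ Real.Gamma ((n : ℝ) + 1/2 + 1) := by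
  set x : ℝ := (n : ℝ) + 1/2 with hx
  have hx0 : 0 < x := by positivity
  have key := Real.Gamma_mul_add_mul_le_rpow_Gamma_mul_rpow_Gamma
    (s := x) (t := x + 1) hx0 (by linarith) (a := 1/2) (b := 1/2)
    (by norm_num) (by norm_num) (by norm_num)
  have hmid : (1/2 : ℝ) * x + (1/2) * (x + 1) = (n : ℝ) + 1 := by rw [hx]; ring
  rw [hmid, Real.Gamma_nat_eq_factorial] at key
  have hG1 : Real.Gamma (x + 1) = x * Real.Gamma x := Real.Gamma_add_one hx0.ne'
  have hGpos : 0 < Real.Gamma x := Real.Gamma_pos_of_pos hx0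
  have hG1pos : 0 < Real.Gamma (x + 1) := Real.Gamma_pos_of_pos (by linarith)
  -- key : n! ≤ Γ(x)^(1/2) * Γ(x+1)^(1/2)
  have hs : 0 < Real.sqrt x := Real.sqrt_pos.mpr hx0
  have hsq : Real.sqrt x * Real.sqrt x = x := Real.mul_self_sqrt hx0.le
  have hr : Real.Gamma x ^ (1/2:ℝ) * Real.Gamma x ^ (1/2:ℝ) = Real.Gamma x := by
    rw [← Real.rpow_add hGpos]; norm_num
  have h2 : Real.Gamma x ^ (1/2 : ℝ) * Real.Gamma (x+1) ^ (1/2 : ℝ)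
      = Real.Gamma (x+1) / Real.sqrt x := by
    have hsqg : Real.sqrt (Real.Gamma x) * Real.sqrt (Real.Gamma x) = Real.Gamma x :=
      Real.mul_self_sqrt hGpos.le
    rw [hG1, Real.mul_rpow hx0.le hGpos.le]
    simp only [← Real.sqrt_eq_rpow]
    rw [eq_div_iff hs.ne']
    linear_combination (Real.sqrt x * Real.sqrt x) * hsqg + Real.Gamma x * hsq
  rw [h2] at key
  calc (n.factorial : ℝ) * Real.sqrt x ≤ (Real.Gamma (x+1) / Real.sqrt x) * Real.sqrt x :=
        mul_le_mul_of_nonneg_right key hs.le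
    _ = Real.Gamma (x+1) := by field_simp

/-- crude bound: `∫_{Iic t} gammaPDF x (1/2) ≤ (1/2)^x/Γ(x) · t^x/x`. -/
lemma my_lint_crude {x t : ℝ} (hx : 0 < x) (ht : 0 ≤ t) :
    ∫⁻ u in Iic t, gammaPDF x (1/2) u
      ≤ ENNReal.ofReal ((1/2 : ℝ) ^ x / Real.Gamma x * (t ^ x / x)) := by
  rw [lintegral_Iic_eq_lintegral_Iio_add_Icc _ ht]
  rw [lintegral_gammaPDF_of_nonpos le_rfl, zero_add]
  have hc : 0 ≤ (1/2 : ℝ) ^ x / Real.Gamma x := by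
    have := Real.Gamma_pos_of_pos hx
    positivity
  have step1 : ∫⁻ u in Icc 0 t, gammaPDF x (1/2) u
      ≤ ∫⁻ u in Icc 0 t, ENNReal.ofReal ((1/2:ℝ) ^ x / Real.Gamma x * u ^ (x-1)) := by
    refine setLIntegral_mono_ae ?_ (ae_of_all _ ?_)
    · exact (((measurable_id'.pow_const _).const_mul _).ennreal_ofReal).aemeasurable
    · intro u hu
      rcases hu with ⟨hu0, hut⟩
      rw [gammaPDF_of_nonneg hu0]
      apply ENNReal.ofReal_le_ofReal
      rw [mul_assoc]
      apply mul_le_mul_of_nonneg_left _ hc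
      nlinarith [Real.exp_le_one_iff.mpr (by nlinarith : -(1/2*u) ≤ 0),
        Real.rpow_nonneg hu0 (x-1), Real.exp_pos (-(1/2*u))]
  refine step1.trans ?_
  have hint : IntegrableOn (fun u : ℝ => (1/2:ℝ) ^ x / Real.Gamma x * u ^ (x-1)) (Icc 0 t) := by
    rw [integrableOn_Icc_iff_integrableOn_Ioc]
    apply Integrable.const_mul
    exact (intervalIntegral.intervalIntegrable_rpow' (a := 0) (b := t)
      (r := x - 1) (by linarith)).1
  rw [← MeasureTheory.ofReal_integral_eq_lintegral_ofReal hint]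
  · apply ENNReal.ofReal_le_ofReal
    rw [MeasureTheory.integral_Icc_eq_integral_Ioc,
      ← intervalIntegral.integral_of_le ht, intervalIntegral.integral_const_mul,
      integral_rpow (Or.inl (by linarith : (-1:ℝ) < x - 1))]
    rw [sub_add_cancel, Real.zero_rpow hx.ne']
    ring_nf
    exact le_refl _
  · filter_upwards [ae_restrict_mem measurableSet_Icc] with u hu
    have : (0:ℝ) ≤ u ^ (x-1) := Real.rpow_nonneg hu.1 _
    positivity

/-- exp-route bound. -/
lemma my_lint_exp {x t : ℝ} (hx : 1 < x) (ht : 0 < t) (h2 : t/2 < x - 1) :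
    ∫⁻ u in Iic t, gammaPDF x (1/2) u
      ≤ ENNReal.ofReal ((1/2 : ℝ) ^ x / Real.Gamma x *
          (t ^ x * Real.exp (-(t/2)) / (x - 1 - t/2))) := by
  have hx0 : (0:ℝ) < x := by linarith
  set c : ℝ := (1/2 : ℝ) ^ x / Real.Gamma x with hcdef
  have hc : 0 ≤ c := by
    have := Real.Gamma_pos_of_pos hx0
    positivity
  set γ : ℝ := (x - 1)/t - 1/2 with hγdef
  have hγ : 0 < γ := by
    rw [hγdef]
    rw [sub_pos, lt_div_iff₀ ht]
    linarith
  set K : ℝ := t ^ (x-1) * Real.exp (-(x-1)) with hKdef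
  have hK : 0 ≤ K := by positivity
  rw [lintegral_Iic_eq_lintegral_Iio_add_Icc _ ht.le]
  rw [lintegral_gammaPDF_of_nonpos le_rfl, zero_add]
  have step1 : ∫⁻ u in Icc 0 t, gammaPDF x (1/2) u
      ≤ ∫⁻ u in Icc 0 t, ENNReal.ofReal (c * (K * Real.exp (γ * u))) := by
    refine setLIntegral_mono_ae ?_ (ae_of_all _ ?_)
    · exact ((((measurable_id'.const_mul γ).exp.const_mul K).const_mul c).ennreal_ofReal).aemeasurable
    · intro u hu
      rcases hu with ⟨hu0, hut⟩
      rw [gammaPDF_of_nonneg hu0]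
      apply ENNReal.ofReal_le_ofReal
      rw [mul_assoc]
      apply mul_le_mul_of_nonneg_left _ hc
      rcases eq_or_lt_of_le hu0 with h | hu0'
      · rw [← h, Real.zero_rpow (by linarith : x - 1 ≠ 0)]
        have : 0 < Real.exp (γ * 0) := Real.exp_pos _
        nlinarith [Real.exp_pos (-(1/2 * (0:ℝ)))]
      · have hlog : Real.log u ≤ Real.log t + (u/t - 1) := by
          have h1 : Real.log (u/t) ≤ u/t - 1 := Real.log_le_sub_one_of_pos (by positivity)
          have h2' : Real.log (u/t) = Real.log u - Real.log t :=
            Real.log_div hu0'.ne' ht.ne'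
          linarith
        have hrw : u ^ (x-1) = Real.exp ((x-1) * Real.log u) := by
          rw [Real.rpow_def_of_pos hu0', mul_comm]
        have htrw : t ^ (x-1) = Real.exp ((x-1) * Real.log t) := by
          rw [Real.rpow_def_of_pos ht, mul_comm]
        calc u ^ (x-1) * Real.exp (-(1/2 * u))
            = Real.exp ((x-1) * Real.log u - 1/2 * u) := by
              rw [hrw, ← Real.exp_add]; ring_nf
          _ ≤ Real.exp ((x-1) * (Real.log t + (u/t - 1)) - 1/2 * u) := by
              apply Real.exp_le_exp.mpr
              have : (x-1) * Real.log u ≤ (x-1) * (Real.log t + (u/t - 1)) :=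
                mul_le_mul_of_nonneg_left hlog (by linarith)
              linarith
          _ = K * Real.exp (γ * u) := by
              rw [hKdef, htrw, ← Real.exp_add, ← Real.exp_add]
              congr 1
              rw [hγdef]
              field_simp
              ring
  refine step1.trans ?_
  have hint : IntegrableOn (fun u : ℝ => c * (K * Real.exp (γ * u))) (Icc 0 t) := by
    apply Continuous.integrableOn_Icc
    continuity
  rw [← MeasureTheory.ofReal_integral_eq_lintegral_ofReal hint]
  · apply ENNReal.ofReal_le_ofReal
    rw [MeasureTheory.integral_Icc_eq_integral_Ioc,
      ← intervalIntegral.integral_of_le ht.le, intervalIntegral.integral_const_mul,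
      intervalIntegral.integral_const_mul]
    have hexp : (∫ u in (0:ℝ)..t, Real.exp (γ * u)) = (Real.exp (γ * t) - 1) / γ := by
      rw [intervalIntegral.integral_comp_mul_left (fun y => Real.exp y) hγ.ne']
      rw [integral_exp, mul_zero, Real.exp_zero, smul_eq_mul]
      field_simp
    rw [hexp, hcdef]
    apply mul_le_mul_of_nonneg_left _ hc
    have hKey : K * ((Real.exp (γ * t) - 1) / γ) ≤ K * (Real.exp (γ * t) / γ) := by
      apply mul_le_mul_of_nonneg_left _ hK
      apply (div_le_div_iff_of_pos_right hγ).mpr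
      linarith [Real.exp_pos (γ * t)]
    refine hKey.trans (le_of_eq ?_)
    have hD : 0 < x - 1 - t/2 := by linarith
    have hγeq : γ = (x - 1 - t/2)/t := by rw [hγdef]; field_simp
    have hγt : γ * t = x - 1 - t/2 := by rw [hγeq]; field_simp
    have hee : Real.exp (-(x-1)) * Real.exp (x - 1 - t/2) = Real.exp (-(t/2)) := by
      rw [← Real.exp_add]; ring_nf
    have htx : t ^ (x-1) * t = t ^ x := by
      rw [← Real.rpow_add_one ht.ne', sub_add_cancel]
    rw [hγt]
    calc K * (Real.exp (x - 1 - t/2) / γ)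
        = (t ^ (x-1) * t) * (Real.exp (-(x-1)) * Real.exp (x - 1 - t/2)) / (x - 1 - t/2) := by
          rw [hKdef, hγeq]; field_simp
      _ = t ^ x * Real.exp (-(t/2)) / (x - 1 - t/2) := by rw [htx, hee]
  · exact ae_of_all _ fun u => mul_nonneg hc (mul_nonneg hK (Real.exp_pos _).le)

/-- Stirling-type bound for Gamma at integers. -/
lemma my_SG_nat (n : ℕ) :
    Real.sqrt (2*π*n) * (n:ℝ) ^ (n:ℝ) * Real.exp (-(n:ℝ)) ≤ Real.Gamma ((n:ℝ)+1) := by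
  rw [Real.Gamma_nat_eq_factorial]
  refine le_trans (le_of_eq ?_) (my_stirling_fact n)
  rw [show (2*π*(n:ℝ)) = π * (2*n) by ring, Real.sqrt_mul Real.pi_pos.le]
  rw [Real.rpow_natCast, div_pow, Real.exp_neg]
  have he : Real.exp (n:ℝ) = Real.exp 1 ^ n := by
    rw [← Real.exp_one_rpow (n:ℝ), Real.rpow_natCast]
  rw [he]
  have : (0:ℝ) < Real.exp 1 ^ n := by positivity
  field_simp

/-- Stirling-type bound for Gamma at half-integers, given numeric certificate. -/
lemma my_SG_half (k : ℕ) (C : ℝ) (hC : 0 < C)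
    (hG : Real.Gamma ((2*k+1:ℝ)/2 + 1) = C * Real.sqrt π)
    (hnum : ((2*(k:ℝ)+1)) * ((2*(k:ℝ)+1)/2) ^ (2*k+1) ≤ C^2 * Real.exp 1 ^ (2*k+1)) :
    Real.sqrt (2*π*((2*(k:ℝ)+1)/2)) * ((2*(k:ℝ)+1)/2) ^ ((2*(k:ℝ)+1)/2 : ℝ)
      * Real.exp (-((2*(k:ℝ)+1)/2)) ≤ Real.Gamma ((2*(k:ℝ)+1)/2 + 1) := by
  set x : ℝ := (2*(k:ℝ)+1)/2 with hxdef
  have hx0 : 0 < x := by positivity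
  rw [hG]
  set L : ℝ := Real.sqrt (2*π*x) * x ^ (x : ℝ) * Real.exp (-x) with hLdef
  have hL0 : 0 ≤ L := by positivity
  have hsq : L^2 ≤ (C * Real.sqrt π)^2 := by
    have e1 : L^2 = (2*π*x) * (x ^ (x:ℝ))^2 * (Real.exp (-x))^2 := by
      rw [hLdef]; rw [mul_pow, mul_pow, Real.sq_sqrt (by positivity)]
    have e2 : (x ^ (x:ℝ))^2 = x ^ (2*k+1) := by
      rw [sq, ← Real.rpow_add hx0]
      rw [show x + x = ((2*k+1 : ℕ):ℝ) by rw [hxdef]; push_cast; ring]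
      rw [Real.rpow_natCast]
    have e3 : (Real.exp (-x))^2 = (Real.exp 1 ^ (2*k+1))⁻¹ := by
      have h1 : -x + -x = -(((2*k+1:ℕ)):ℝ) := by rw [hxdef]; push_cast; ring
      rw [sq, ← Real.exp_add, h1, Real.exp_neg]
      congr 1
      rw [← Real.exp_one_rpow (((2*k+1:ℕ)):ℝ), Real.rpow_natCast]
    have e4 : (C * Real.sqrt π)^2 = C^2 * π := by
      rw [mul_pow, Real.sq_sqrt Real.pi_pos.le]
    rw [e1, e2, e3, e4]
    have hexp : (0:ℝ) < Real.exp 1 ^ (2*k+1) := by positivity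
    rw [mul_inv_le_iff₀ hexp]
    calc 2*π*x * x ^ (2*k+1) = π * ((2*(k:ℝ)+1) * x ^ (2*k+1)) := by
          rw [hxdef]; ring
      _ ≤ π * (C^2 * Real.exp 1 ^ (2*k+1)) := by
          apply mul_le_mul_of_nonneg_left _ Real.pi_pos.le
          rw [hxdef]
          exact hnum
      _ = C^2 * π * Real.exp 1 ^ (2*k+1) := by ring
  calc L = Real.sqrt (L^2) := by rw [Real.sqrt_sq hL0]
    _ ≤ Real.sqrt ((C * Real.sqrt π)^2) := Real.sqrt_le_sqrt hsq
    _ = C * Real.sqrt π := Real.sqrt_sq (by positivity)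
lemma my_poly (x c : ℝ) (hx : 11/2 ≤ x) (hc0 : 0.1353 ≤ c) (hc1 : c ≤ 0.13534) :
    x^3 ≤ (x - 1 - x*c)^2 * (1 + x*c)^2 * (x - 1/2) := by
  have h1 : 0.8646 * x - 1 ≤ x - 1 - x*c := by nlinarith
  have h2 : 1 + 0.1353 * x ≤ 1 + x*c := by nlinarith
  have h1p : (0:ℝ) < 0.8646 * x - 1 := by nlinarith
  have h2p : (0:ℝ) < 1 + 0.1353 * x := by nlinarith
  have key : x^3 ≤ (0.8646*x - 1)^2 * (1 + 0.1353*x)^2 * (x - 1/2) := by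
    nlinarith [sq_nonneg (x - 11/2), sq_nonneg x, mul_pos h1p h2p, sq_nonneg (x*(x-11/2)),
      mul_nonneg (mul_nonneg h1p.le h1p.le) (mul_nonneg h2p.le h2p.le)]
  refine key.trans ?_
  have e1 : (0.8646*x - 1)^2 ≤ (x - 1 - x*c)^2 := by nlinarith
  have e2 : (1 + 0.1353*x)^2 ≤ (1 + x*c)^2 := by nlinarith
  have : (0:ℝ) < x - 1/2 := by linarith
  nlinarith [mul_pos (mul_pos h1p h1p) (mul_pos h2p h2p), sq_nonneg (x-1-x*c), sq_nonneg (1+x*c),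
    mul_le_mul e1 e2 (by positivity) (sq_nonneg _)]

lemma my_SG (d : ℕ) (hd : 1 ≤ d) (h : d % 2 = 0 ∨ d ≤ 9) :
    Real.sqrt (2*π*((d:ℝ)/2)) * ((d:ℝ)/2) ^ ((d:ℝ)/2)
      * Real.exp (-((d:ℝ)/2)) ≤ Real.Gamma ((d:ℝ)/2 + 1) := by
  have hexp1 : (2.7182818283:ℝ) < Real.exp 1 := Real.exp_one_gt_d9
  rcases h with h | h
  · obtain ⟨m, rfl⟩ : ∃ m, d = 2 * m := ⟨d / 2, by omega⟩
    have hc : ((2*m : ℕ):ℝ)/2 = (m:ℝ) := by push_cast; ring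
    rw [hc]
    exact my_SG_nat m
  · have hodd : d % 2 = 1 ∨ d % 2 = 0 := by omega
    rcases hodd with hodd | heven
    · obtain ⟨k, rfl⟩ : ∃ k, d = 2 * k + 1 := ⟨d / 2, by omega⟩
      have hk : k ≤ 4 := by omega
      have hcast : ((2*k+1 : ℕ):ℝ)/2 = (2*(k:ℝ)+1)/2 := by push_cast; ring
      rw [hcast]
      have hepow : ∀ m : ℕ, Real.exp (m:ℝ) = Real.exp 1 ^ m := by
        intro m; rw [← Real.exp_nat_mul, mul_one]
      have he3 : (2.7182818283:ℝ)^3 ≤ Real.exp 3 := by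
        rw [show ((3:ℝ)) = ((3:ℕ):ℝ) by norm_num, hepow 3]
        exact pow_le_pow_left₀ (by norm_num) hexp1.le 3
      have he1 : (2.7182818283:ℝ) ≤ Real.exp 1 := hexp1.le
      have he5 : (2.7182818283:ℝ)^5 ≤ Real.exp 5 := by
        rw [show ((5:ℝ)) = ((5:ℕ):ℝ) by norm_num, hepow 5]
        exact pow_le_pow_left₀ (by norm_num) hexp1.le 5
      have he7 : (2.7182818283:ℝ)^7 ≤ Real.exp 7 := by
        rw [show ((7:ℝ)) = ((7:ℕ):ℝ) by norm_num, hepow 7]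
        exact pow_le_pow_left₀ (by norm_num) hexp1.le 7
      have he9 : (2.7182818283:ℝ)^9 ≤ Real.exp 9 := by
        rw [show ((9:ℝ)) = ((9:ℕ):ℝ) by norm_num, hepow 9]
        exact pow_le_pow_left₀ (by norm_num) hexp1.le 9
      have g12 : Real.Gamma (1/2 : ℝ) = Real.sqrt π := Real.Gamma_one_half_eq
      have g32 : Real.Gamma (3/2 : ℝ) = (1/2) * Real.sqrt π := by
        rw [show (3/2:ℝ) = 1/2 + 1 by norm_num, Real.Gamma_add_one (by norm_num), g12]
      have g52 : Real.Gamma (5/2 : ℝ) = (3/4) * Real.sqrt π := by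
        rw [show (5/2:ℝ) = 3/2 + 1 by norm_num, Real.Gamma_add_one (by norm_num), g32]; ring
      have g72 : Real.Gamma (7/2 : ℝ) = (15/8) * Real.sqrt π := by
        rw [show (7/2:ℝ) = 5/2 + 1 by norm_num, Real.Gamma_add_one (by norm_num), g52]; ring
      have g92 : Real.Gamma (9/2 : ℝ) = (105/16) * Real.sqrt π := by
        rw [show (9/2:ℝ) = 7/2 + 1 by norm_num, Real.Gamma_add_one (by norm_num), g72]; ring
      have g112 : Real.Gamma (11/2 : ℝ) = (945/32) * Real.sqrt π := by
        rw [show (11/2:ℝ) = 9/2 + 1 by norm_num, Real.Gamma_add_one (by norm_num), g92]; ring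
      interval_cases k
      · refine my_SG_half 0 (1/2) (by norm_num) (by push_cast; norm_num [g32]) ?_
        norm_num
        nlinarith [he1]
      · refine my_SG_half 1 (3/4) (by norm_num) (by push_cast; norm_num [g52]) ?_
        norm_num
        nlinarith [he3]
      · refine my_SG_half 2 (15/8) (by norm_num) (by push_cast; norm_num [g72]) ?_
        norm_num
        nlinarith [he5]
      · refine my_SG_half 3 (105/16) (by norm_num) (by push_cast; norm_num [g92]) ?_
        norm_num
        nlinarith [he7]
      · refine my_SG_half 4 (945/32) (by norm_num) (by push_cast; norm_num [g112]) ?_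
        norm_num
        nlinarith [he9]
    · obtain ⟨m, rfl⟩ : ∃ m, d = 2 * m := ⟨d / 2, by omega⟩
      have hc : ((2*m : ℕ):ℝ)/2 = (m:ℝ) := by push_cast; ring
      rw [hc]
      exact my_SG_nat m

set_option maxHeartbeats 2000000 in
lemma my_keyC (d : ℕ) (hd : 1 ≤ d) :
    ∫⁻ u in Iic ((d:ℝ)/Real.exp 2), gammaPDF ((d:ℝ)/2) (1/2) u
      ≤ ENNReal.ofReal (Real.exp (-(d:ℝ)/2) / Real.sqrt (π * d)) := by
  have hd0 : (0:ℝ) < d := by exact_mod_cast hd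
  set x : ℝ := (d:ℝ)/2 with hxdef
  set t : ℝ := (d:ℝ)/Real.exp 2 with htdef
  have hx0 : 0 < x := by positivity
  have ht0 : 0 < t := by rw [htdef]; positivity
  have hΓpos : 0 < Real.Gamma x := Real.Gamma_pos_of_pos hx0
  have hΓ1pos : 0 < Real.Gamma (x+1) := Real.Gamma_pos_of_pos (by linarith)
  have hG1 : Real.Gamma (x+1) = x * Real.Gamma x := Real.Gamma_add_one hx0.ne'
  have hsqx : π * (d:ℝ) = 2*π*x := by rw [hxdef]; ring
  have hhx : Real.exp (-(d:ℝ)/2) = Real.exp (-x) := by rw [hxdef]; ring_nf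
  have hhalf : (1/2:ℝ)^x * t^x = x^x * Real.exp (-2*x) := by
    rw [← Real.mul_rpow (by norm_num) ht0.le]
    have h1 : (1/2:ℝ) * t = x * Real.exp (-2) := by
      rw [htdef, hxdef, Real.exp_neg]
      have := (Real.exp_pos 2).ne'
      field_simp
    rw [h1, Real.mul_rpow hx0.le (Real.exp_pos _).le, ← Real.exp_mul]
  have hsqrt2πx : Real.sqrt (2*π*x) = Real.sqrt π * (Real.sqrt 2 * Real.sqrt x) := by
    rw [show (2*π*x : ℝ) = π * (2*x) by ring, Real.sqrt_mul Real.pi_pos.le,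
      Real.sqrt_mul (by norm_num : (0:ℝ) ≤ 2)]
  rcases em (d % 2 = 0 ∨ d ≤ 9) with h | h
  · -- crude branch
    refine (my_lint_crude hx0 ht0.le).trans (ENNReal.ofReal_le_ofReal ?_)
    have lhs_eq : (1/2:ℝ)^x/Real.Gamma x * (t^x/x)
        = x^x * Real.exp (-2*x) / Real.Gamma (x+1) := by
      rw [div_mul_div_comm, hhalf, hG1, mul_comm x (Real.Gamma x)]
    rw [lhs_eq, hhx, hsqx]
    have SG := my_SG d hd h
    rw [← hxdef] at SG
    rw [div_le_div_iff₀ hΓ1pos (Real.sqrt_pos.mpr (by positivity))]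
    have hee : Real.exp (-x) * Real.exp (-x) = Real.exp (-2*x) := by
      rw [← Real.exp_add]; ring_nf
    calc x^x * Real.exp (-2*x) * Real.sqrt (2*π*x)
        = (Real.sqrt (2*π*x) * x^x * Real.exp (-x)) * Real.exp (-x) := by
          rw [← hee]; ring
      _ ≤ Real.Gamma (x+1) * Real.exp (-x) :=
          mul_le_mul_of_nonneg_right SG (Real.exp_pos _).le
      _ = Real.exp (-x) * Real.Gamma (x+1) := by ring
  · -- exp-route branch, d odd ≥ 11
    push_neg at h
    obtain ⟨hodd, h11⟩ := h
    obtain ⟨n, rfl⟩ : ∃ n, d = 2*n+1 := ⟨d/2, by omega⟩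
    have hn5 : 5 ≤ n := by omega
    have hn0 : (0:ℝ) < n := by exact_mod_cast (by omega : 0 < n)
    have hxn : x = (n:ℝ) + 1/2 := by rw [hxdef]; push_cast; ring
    have hx11 : 11/2 ≤ x := by
      rw [hxn]
      have : (5:ℝ) ≤ (n:ℝ) := by exact_mod_cast hn5
      linarith
    set c : ℝ := Real.exp (-2) with hcdef
    have hexp1g : (2.7182818283:ℝ) < Real.exp 1 := Real.exp_one_gt_d9
    have hexp1l : Real.exp 1 < 2.7182818286 := Real.exp_one_lt_d9
    have he2 : Real.exp 2 = Real.exp 1 * Real.exp 1 := by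
      rw [← Real.exp_add]; norm_num
    have he2l : (7.389:ℝ) < Real.exp 2 := by rw [he2]; nlinarith
    have he2u : Real.exp 2 < 7.39 := by rw [he2]; nlinarith
    have hc0 : (0.1353:ℝ) ≤ c := by
      rw [hcdef, Real.exp_neg]
      calc (0.1353:ℝ) ≤ (7.39:ℝ)⁻¹ := by norm_num
        _ ≤ (Real.exp 2)⁻¹ := inv_anti₀ (Real.exp_pos 2) he2u.le
    have hc1 : c ≤ 0.13534 := by
      rw [hcdef, Real.exp_neg]
      calc (Real.exp 2)⁻¹ ≤ (7.389:ℝ)⁻¹ := inv_anti₀ (by norm_num) he2l.le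
        _ ≤ 0.13534 := by norm_num
    have hcpos : 0 < c := by rw [hcdef]; positivity
    have ht2 : t/2 = x * c := by
      rw [htdef, hxdef, hcdef, Real.exp_neg]
      have := (Real.exp_pos 2).ne'
      field_simp
    have hD : t/2 < x - 1 := by rw [ht2]; nlinarith
    have hx1 : 1 < x := by linarith
    refine (my_lint_exp hx1 ht0 hD).trans (ENNReal.ofReal_le_ofReal ?_)
    rw [hhx, hsqx]
    have hDpos : 0 < x - 1 - t/2 := by linarith
    have lhs_eq : (1/2:ℝ)^x/Real.Gamma x * (t^x * Real.exp (-(t/2))/(x-1-t/2))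
        = x * (x^x * Real.exp (-2*x) * Real.exp (-(t/2))) / ((x-1-t/2) * Real.Gamma (x+1)) := by
      rw [div_mul_div_comm, ← mul_assoc, hhalf, hG1]
      rw [div_eq_div_iff (mul_pos hΓpos hDpos).ne' (mul_pos hDpos (mul_pos hx0 hΓpos)).ne']
      ring
    rw [lhs_eq]
    rw [div_le_div_iff₀ (mul_pos hDpos hΓ1pos) (Real.sqrt_pos.mpr (by positivity))]
    -- goal : x * (x^x * exp(-2x) * exp(-(t/2))) * √(2πx) ≤ exp(-x) * ((x-1-t/2) * Γ(x+1))
    have hepow : ∀ m : ℕ, Real.exp (m:ℝ) = Real.exp 1 ^ m := by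
      intro m; rw [← Real.exp_nat_mul, mul_one]
    -- P1 : x^n ≤ n^n * exp(1/2)   (rpow n)
    have hP1 : x ^ ((n:ℝ)) ≤ (n:ℝ) ^ ((n:ℝ)) * Real.exp (1/2) := by
      have hstep : x ≤ (n:ℝ) * Real.exp (1/(2*(n:ℝ))) := by
        have := Real.add_one_le_exp (1/(2*(n:ℝ)))
        have h2 : (n:ℝ) * (1/(2*(n:ℝ)) + 1) ≤ (n:ℝ) * Real.exp (1/(2*(n:ℝ))) :=
          mul_le_mul_of_nonneg_left this hn0.le
        have h3 : (n:ℝ) * (1/(2*(n:ℝ)) + 1) = (n:ℝ) + 1/2 := by field_simp; ring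
      

        rw [hxn]; linarith [h2, h3.symm.le]
      calc x ^ ((n:ℝ)) ≤ ((n:ℝ) * Real.exp (1/(2*(n:ℝ)))) ^ ((n:ℝ)) :=
            Real.rpow_le_rpow (by positivity) hstep (by positivity)
        _ = (n:ℝ) ^ ((n:ℝ)) * Real.exp (1/2) := by
            rw [Real.mul_rpow hn0.le (Real.exp_pos _).le, ← Real.exp_mul]
            congr 2
            field_simp
    -- P2 : x * √x * exp (-(t/2)) ≤ (x - 1 - t/2) * √(n)
    have hP2 : x * Real.sqrt x * Real.exp (-(t/2)) ≤ (x - 1 - t/2) * Real.sqrt (n:ℝ) := by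
      have hE : Real.exp (-(t/2)) ≤ (1 + x*c)⁻¹ := by
        rw [ht2, Real.exp_neg]
        apply inv_anti₀ (by positivity)
        linarith [Real.add_one_le_exp (x*c)]
      have hB : 0 < (x - 1 - x*c) * (1 + x*c) := by
        apply mul_pos
        · rw [ht2] at hDpos; linarith
        · positivity
      have hmain : x * Real.sqrt x ≤ (x - 1 - x*c) * (1 + x*c) * Real.sqrt (n:ℝ) := by
        have hnx : (n:ℝ) = x - 1/2 := by rw [hxn]; ring
        have lhs_sqrt : x * Real.sqrt x = Real.sqrt (x^3) := by
          rw [show x^3 = x^2 * x by ring, Real.sqrt_mul (by positivity), Real.sqrt_sq hx0.le]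
        have rhs_sqrt : (x - 1 - x*c) * (1 + x*c) * Real.sqrt (n:ℝ)
            = Real.sqrt ((x - 1 - x*c)^2 * (1 + x*c)^2 * (x - 1/2)) := by
          rw [hnx]
          rw [Real.sqrt_mul (by positivity), Real.sqrt_mul (by positivity),
            Real.sqrt_sq (by rw [ht2] at hDpos; linarith), Real.sqrt_sq (by positivity)]
        rw [lhs_sqrt, rhs_sqrt]
        exact Real.sqrt_le_sqrt (my_poly x c hx11 hc0 hc1)
      calc x * Real.sqrt x * Real.exp (-(t/2))
          ≤ x * Real.sqrt x * (1 + x*c)⁻¹ :=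
            mul_le_mul_of_nonneg_left hE (by positivity)
        _ ≤ ((x - 1 - x*c) * (1 + x*c) * Real.sqrt (n:ℝ)) * (1 + x*c)⁻¹ :=
            mul_le_mul_of_nonneg_right hmain (by positivity)
        _ = (x - 1 - x*c) * Real.sqrt (n:ℝ) := by
            field_simp
        _ = (x - 1 - t/2) * Real.sqrt (n:ℝ) := by rw [ht2]
    -- Gamma lower bound
    have hΓge : Real.sqrt x * (Real.sqrt π * (Real.sqrt (2*(n:ℝ)) * ((n:ℝ)/Real.exp 1)^n))
        ≤ Real.Gamma (x+1) := by
      have h1 := my_stirling_fact n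
      have h2 := my_gamma_interp n
      have hxx : Real.Gamma ((n:ℝ) + 1/2 + 1) = Real.Gamma (x+1) := by rw [hxn]
      rw [hxx] at h2
      have h3 : Real.sqrt π * (Real.sqrt (2*(n:ℝ)) * ((n:ℝ)/Real.exp 1)^n) * Real.sqrt x
          ≤ (n.factorial : ℝ) * Real.sqrt x := by
        apply mul_le_mul_of_nonneg_right h1 (Real.sqrt_nonneg _)
      have h4 : ((n:ℝ) + 1/2) = x := hxn.symm
      rw [h4] at h2
      calc Real.sqrt x * (Real.sqrt π * (Real.sqrt (2*(n:ℝ)) * ((n:ℝ)/Real.exp 1)^n))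
          = Real.sqrt π * (Real.sqrt (2*(n:ℝ)) * ((n:ℝ)/Real.exp 1)^n) * Real.sqrt x := by ring
        _ ≤ (n.factorial : ℝ) * Real.sqrt x := h3
        _ ≤ Real.Gamma (x+1) := h2
    -- assemble
    have hxsplit : x ^ x = x ^ ((n:ℝ)) * Real.sqrt x := by
      nth_rewrite 2 [hxn]
      rw [Real.rpow_add hx0, Real.sqrt_eq_rpow]
    have hne : ((n:ℝ)/Real.exp 1)^n = (n:ℝ) ^ ((n:ℝ)) * Real.exp (-(n:ℝ)) := by
      rw [div_pow, Real.rpow_natCast, Real.exp_neg, ← hepow n, div_eq_mul_inv]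
    have heA : Real.exp (1/2) * Real.exp (-2*x) = Real.exp (-(n:ℝ)) * Real.exp (-x) := by
      rw [← Real.exp_add, ← Real.exp_add]
      congr 1
      rw [hxn]; ring
    calc x * (x^x * Real.exp (-2*x) * Real.exp (-(t/2))) * Real.sqrt (2*π*x)
        = (x ^ ((n:ℝ))) * ((x * Real.sqrt x * Real.exp (-(t/2)))
            * (Real.exp (-2*x) * (Real.sqrt π * (Real.sqrt 2 * Real.sqrt x)))) := by
          rw [hxsplit, hsqrt2πx]; ring
      _ ≤ ((n:ℝ) ^ ((n:ℝ)) * Real.exp (1/2)) * (((x - 1 - t/2) * Real.sqrt (n:ℝ))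
            * (Real.exp (-2*x) * (Real.sqrt π * (Real.sqrt 2 * Real.sqrt x)))) := by
          apply mul_le_mul hP1
          · apply mul_le_mul_of_nonneg_right hP2 (by positivity)
          · positivity
          · positivity
      _ = Real.exp (-x) * ((x - 1 - t/2) *
            (Real.sqrt x * (Real.sqrt π * ((Real.sqrt 2 * Real.sqrt (n:ℝ)) *
              ((n:ℝ) ^ ((n:ℝ)) * Real.exp (-(n:ℝ))))))) := by
          rw [show ((n:ℝ) ^ ((n:ℝ)) * Real.exp (1/2)) * (((x - 1 - t/2) * Real.sqrt (n:ℝ))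
            * (Real.exp (-2*x) * (Real.sqrt π * (Real.sqrt 2 * Real.sqrt x))))
            = (Real.exp (1/2) * Real.exp (-2*x)) * ((x - 1 - t/2) *
              (Real.sqrt x * (Real.sqrt π * ((Real.sqrt 2 * Real.sqrt (n:ℝ)) *
                ((n:ℝ) ^ ((n:ℝ))))))) by ring, heA]
          ring
      _ ≤ Real.exp (-x) * ((x - 1 - t/2) * Real.Gamma (x+1)) := by
          apply mul_le_mul_of_nonneg_left _ (Real.exp_pos _).le
          apply mul_le_mul_of_nonneg_left _ hDpos.le
          calc Real.sqrt x * (Real.sqrt π * ((Real.sqrt 2 * Real.sqrt (n:ℝ)) *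
                ((n:ℝ) ^ ((n:ℝ)) * Real.exp (-(n:ℝ)))))
              = Real.sqrt x * (Real.sqrt π * (Real.sqrt (2*(n:ℝ)) * ((n:ℝ)/Real.exp 1)^n)) := by
                rw [hne, ← Real.sqrt_mul (by norm_num : (0:ℝ) ≤ 2)]
            _ ≤ Real.Gamma (x+1) := hΓge

lemma my_keyB (d₁ : ℕ) (hd₁ : 1 ≤ d₁) {s : ℝ} (hs : 0 ≤ s) :
    ∫⁻ u in Ioi s, gammaPDF ((d₁:ℝ)/2) (1/2) u
      ≤ ENNReal.ofReal (Real.exp (-s/4 + d₁/2)) := by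
  have hd0 : (0:ℝ) < d₁ := by exact_mod_cast hd₁
  set a : ℝ := (d₁:ℝ)/2 with hadef
  have ha : 0 < a := by positivity
  have hΓ : 0 < Real.Gamma a := Real.Gamma_pos_of_pos ha
  have hconst : (0:ℝ) ≤ Real.exp (-s/4) * (2:ℝ) ^ a := by positivity
  have step1 : ∫⁻ u in Ioi s, gammaPDF a (1/2) u
      ≤ ∫⁻ u in Ioi s, ENNReal.ofReal (Real.exp (-s/4) * (2:ℝ) ^ a) * gammaPDF a (1/4) u := by
    refine setLIntegral_mono_ae ?_ (ae_of_all _ ?_)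
    · exact (((measurable_gammaPDFReal a (1/4)).ennreal_ofReal).const_mul _).aemeasurable
    · intro u hu
      have hus : s < u := hu
      have hu0 : (0:ℝ) ≤ u := le_of_lt (lt_of_le_of_lt hs hus)
      rw [gammaPDF_of_nonneg hu0, gammaPDF_of_nonneg hu0, ← ENNReal.ofReal_mul hconst]
      apply ENNReal.ofReal_le_ofReal
      have hhalf : ((1:ℝ)/2) ^ a = (2:ℝ) ^ a * ((1:ℝ)/4) ^ a := by
        rw [← Real.mul_rpow (by norm_num) (by norm_num)]
        norm_num
      have hexp : Real.exp (-(1/2 * u)) ≤ Real.exp (-s/4) * Real.exp (-(1/4 * u)) := by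
        rw [← Real.exp_add]
        apply Real.exp_le_exp.mpr
        linarith
      calc (1/2:ℝ) ^ a / Real.Gamma a * u ^ (a-1) * Real.exp (-(1/2 * u))
          = ((2:ℝ) ^ a * ((1/4:ℝ) ^ a / Real.Gamma a * u ^ (a-1))) * Real.exp (-(1/2*u)) := by
            rw [hhalf]; ring
        _ ≤ ((2:ℝ) ^ a * ((1/4:ℝ) ^ a / Real.Gamma a * u ^ (a-1)))
              * (Real.exp (-s/4) * Real.exp (-(1/4 * u))) := by
            apply mul_le_mul_of_nonneg_left hexp
            have : (0:ℝ) ≤ u ^ (a-1) := Real.rpow_nonneg hu0 _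
            positivity
        _ = Real.exp (-s/4) * (2:ℝ) ^ a * ((1/4:ℝ) ^ a / Real.Gamma a * u ^ (a-1)
              * Real.exp (-(1/4 * u))) := by ring
  refine step1.trans ?_
  rw [show (fun u => ENNReal.ofReal (Real.exp (-s/4) * (2:ℝ) ^ a) * gammaPDF a (1/4) u)
      = (fun u => ENNReal.ofReal (Real.exp (-s/4) * (2:ℝ) ^ a)
        * ENNReal.ofReal (gammaPDFReal a (1/4) u)) from rfl,
    lintegral_const_mul _ (measurable_gammaPDFReal a (1/4)).ennreal_ofReal]
  calc ENNReal.ofReal (Real.exp (-s/4) * (2:ℝ) ^ a) * ∫⁻ u in Ioi s, gammaPDF a (1/4) u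
      ≤ ENNReal.ofReal (Real.exp (-s/4) * (2:ℝ) ^ a) * ∫⁻ u, gammaPDF a (1/4) u :=
        mul_le_mul_right (setLIntegral_le_lintegral _ _) _
    _ = ENNReal.ofReal (Real.exp (-s/4) * (2:ℝ) ^ a) := by
        rw [lintegral_gammaPDF_eq_one ha (by norm_num), mul_one]
    _ ≤ ENNReal.ofReal (Real.exp (-s/4 + d₁/2)) := by
        apply ENNReal.ofReal_le_ofReal
        rw [Real.exp_add]
        apply mul_le_mul_of_nonneg_left _ (Real.exp_pos _).le
        calc (2:ℝ) ^ a ≤ (Real.exp 1) ^ a :=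
              Real.rpow_le_rpow (by norm_num) (by nlinarith [Real.exp_one_gt_d9]) ha.le
          _ = Real.exp a := Real.exp_one_rpow a
          _ = Real.exp ((d₁:ℝ)/2) := by rw [hadef]


/-- for independent chi-square random variables `V₁ ~ χ²_{d₁}` and
`V₂ ~ χ²_{d₂}`, and `a > 1`,
`P(V₁ > (a-1)V₂) ≤ e^{-(d₂/e²)(a-1)/4 + d₁/2} + e^{-d₂/2}/√(π d₂)`. -/
theorem chiSq_ratio_tail_bound
    {Ω : Type*} [MeasurableSpace Ω] (P : Measure Ω) [IsProbabilityMeasure P]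
    (d₁ d₂ : ℕ) (hd₁ : 1 ≤ d₁) (hd₂ : 1 ≤ d₂)
    (a : ℝ) (ha : 1 < a)
    (V₁ V₂ : Ω → ℝ) (hV₁meas : Measurable V₁) (hV₂meas : Measurable V₂)
    (hV₁ : Measure.map V₁ P = gammaMeasure ((d₁ : ℝ) / 2) (1 / 2))
    (hV₂ : Measure.map V₂ P = gammaMeasure ((d₂ : ℝ) / 2) (1 / 2))
    (hindep : IndepFun V₁ V₂ P) :
    P {ω | (a - 1) * V₂ ω < V₁ ω} ≤
      ENNReal.ofReal (Real.exp (-((d₂ : ℝ) / Real.exp 2) * (a - 1) / 4 + d₁ / 2) +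
        Real.exp (-(d₂ : ℝ) / 2) / Real.sqrt (π * d₂)) := by
  have hd20 : (0:ℝ) < d₂ := by exact_mod_cast hd₂
  set t : ℝ := (d₂:ℝ)/Real.exp 2 with htdef
  have ht0 : 0 < t := by rw [htdef]; positivity
  set s : ℝ := (a-1)*t with hsdef
  have hs0 : 0 ≤ s := mul_nonneg (by linarith) ht0.le
  have hsub : {ω | (a-1) * V₂ ω < V₁ ω} ⊆ (V₁ ⁻¹' Ioi s) ∪ (V₂ ⁻¹' Iic t) := by
    intro ω hω
    by_cases hV : V₂ ω ≤ t
    · exact Or.inr hV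
    · left
      simp only [Set.mem_preimage, Set.mem_Ioi]
      push_neg at hV
      have h1 : s < (a-1) * V₂ ω := by
        rw [hsdef]
        exact mul_lt_mul_of_pos_left hV (by linarith)
      exact lt_trans h1 hω
  calc P {ω | (a-1) * V₂ ω < V₁ ω}
      ≤ P ((V₁ ⁻¹' Ioi s) ∪ (V₂ ⁻¹' Iic t)) := measure_mono hsub
    _ ≤ P (V₁ ⁻¹' Ioi s) + P (V₂ ⁻¹' Iic t) := measure_union_le _ _
    _ ≤ ENNReal.ofReal (Real.exp (-s/4 + d₁/2))
        + ENNReal.ofReal (Real.exp (-(d₂:ℝ)/2) / Real.sqrt (π * d₂)) := by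
        apply add_le_add
        · rw [← Measure.map_apply hV₁meas measurableSet_Ioi, hV₁, gammaMeasure,
            withDensity_apply _ measurableSet_Ioi]
          exact my_keyB d₁ hd₁ hs0
        · rw [← Measure.map_apply hV₂meas measurableSet_Iic, hV₂, gammaMeasure,
            withDensity_apply _ measurableSet_Iic]
          exact my_keyC d₂ hd₂
    _ = ENNReal.ofReal (Real.exp (-s/4 + d₁/2)
        + Real.exp (-(d₂:ℝ)/2) / Real.sqrt (π * d₂)) :=
        (ENNReal.ofReal_add (by positivity) (by positivity)).symm
    _ = ENNReal.ofReal (Real.exp (-((d₂ : ℝ) / Real.exp 2) * (a - 1) / 4 + d₁ / 2) +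
        Real.exp (-(d₂ : ℝ) / 2) / Real.sqrt (π * d₂)) := by
        congr 2
        rw [hsdef, htdef]
        ring
end

section
/- Let k ≥ 1 be an integer and let V be a chi-square random variable with k degrees of freedom. Then P( V < k/e² ) ≤ e^{−k/2}/√(π·k). -/
open MeasureTheory ProbabilityTheory Real
open Stirling Set


-- Padé bound
lemma pade_log {u : ℝ} (hu : 0 ≤ u) : 2*u/(2+u) ≤ Real.log (1+u) := by
  have h2u : (0:ℝ) < 2 + u := by linarith
  rw [div_le_iff₀ h2u]
  set f : ℝ → ℝ := fun x => Real.log (1+x) * (2+x) - 2*x with hf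
  have hd : ∀ x : ℝ, 0 ≤ x → HasDerivAt f (Real.log (1+x) - x/(1+x)) x := by
    intro x hx
    have h1x : (0:ℝ) < 1 + x := by linarith
    have h := ((Real.hasDerivAt_log h1x.ne').comp x
      ((hasDerivAt_id x).const_add 1)).mul ((hasDerivAt_id x).const_add 2)
    have h2 := h.sub ((hasDerivAt_id x).const_mul 2)
    refine h2.congr_deriv ?_
    simp only [id, Function.comp_apply]
    field_simp
    ring
  have hmono : MonotoneOn f (Set.Ici (0:ℝ)) := by
    apply monotoneOn_of_deriv_nonneg (convex_Ici 0)
    · apply ContinuousOn.sub (ContinuousOn.mul ?_ (by fun_prop)) (by fun_prop)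
      apply ContinuousOn.log (by fun_prop)
      intro x hx
      simp only [interior_Ici, Set.mem_Ici, Set.mem_Ioi] at hx
      exact ne_of_gt (by linarith)
    · intro x hx
      rw [interior_Ici] at hx
      exact ((hd x (le_of_lt (Set.mem_Ioi.mp hx))).differentiableAt).differentiableWithinAt
    · intro x hx
      rw [interior_Ici] at hx
      rw [(hd x (le_of_lt (Set.mem_Ioi.mp hx))).deriv]
      have hx' : 0 < x := Set.mem_Ioi.mp hx
      have h1x : (0:ℝ) < 1 + x := by linarith
      have : x/(1+x) = 1 - (1+x)⁻¹ := by field_simp; ring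
      rw [this]
      have := Real.one_sub_inv_le_log_of_pos h1x
      linarith
  have h0 : f 0 ≤ f u := hmono (by simp) (by simpa using hu) hu
  simp only [hf, Real.log_one, add_zero, mul_zero, zero_mul, sub_zero] at h0
  simp at h0
  linarith

lemma sqrt_pi_le_stirlingSeq (n : ℕ) : √π ≤ stirlingSeq (n+1) :=
  stirlingSeq'_antitone.le_of_tendsto
    (tendsto_stirlingSeq_sqrt_pi.comp (Filter.tendsto_add_atTop_nat 1)) n

lemma stirling_step (n : ℕ) :
    Real.log (stirlingSeq (n+1)) - Real.log (stirlingSeq (n+2)) ≤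
      1/4 * (1/(n+1) - 1/(n+2) : ℝ) := by
  refine (log_stirlingSeq_diff_le_geo_sum n).trans (le_of_eq ?_)
  push_cast
  have h4 : (0:ℝ) < 2*((n:ℝ)+1)+1 := by positivity
  have h5 : ((1:ℝ)/(2*((n:ℝ)+1)+1))^2 < 1 := by
    rw [one_div, inv_pow]
    apply inv_lt_one_of_one_lt₀
    nlinarith [Nat.cast_nonneg (α := ℝ) n]
  have hne : (1:ℝ) - (1/(2*((n:ℝ)+1)+1))^2 ≠ 0 := by linarith
  have h1 : ((n:ℝ)+1) ≠ 0 := by positivity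
  have h2 : ((n:ℝ)+2) ≠ 0 := by positivity
  field_simp
  ring_nf
  have h6 : (8 + (n:ℝ)*12 + (n:ℝ)^2*4) ≠ 0 := by positivity
  field_simp
  ring

lemma stirling_telescope (j : ℕ) (p : ℕ) :
    Real.log (stirlingSeq (j+1)) - Real.log (stirlingSeq (j+1+p)) ≤
      1/4 * (1/((j:ℝ)+1) - 1/((j:ℝ)+1+(p:ℝ))) := by
  induction p with
  | zero => simp
  | succ q ih =>
    have hidx1 : j+1+q = (j+q)+1 := by omega
    have hidx2 : j+1+(q+1) = (j+q)+2 := by omega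
    have hstep := stirling_step (j+q)
    rw [hidx1] at ih
    rw [hidx2]
    have hc : ((j+q : ℕ):ℝ) = (j:ℝ)+(q:ℝ) := by push_cast; ring
    rw [hc] at hstep
    have hq : (((q:ℕ)+1 : ℕ):ℝ) = (q:ℝ)+1 := by push_cast; ring
    rw [hq]
    have hj1 : (0:ℝ) < (j:ℝ)+1 := by positivity
    have hjq1 : (0:ℝ) < (j:ℝ)+(q:ℝ)+1 := by positivity
    have hjq2 : (0:ℝ) < (j:ℝ)+(q:ℝ)+2 := by positivity
    have e : (j:ℝ)+1+(q:ℝ) = (j:ℝ)+(q:ℝ)+1 := by ring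
    rw [e] at ih
    have harith : 1/4 * (1/((j:ℝ)+1) - 1/((j:ℝ)+(q:ℝ)+1)) +
        1/4 * (1/((j:ℝ)+(q:ℝ)+1) - 1/((j:ℝ)+(q:ℝ)+2)) =
        1/4 * (1/((j:ℝ)+1) - 1/((j:ℝ)+1+((q:ℝ)+1))) := by
      have : (j:ℝ)+1+((q:ℝ)+1) = (j:ℝ)+(q:ℝ)+2 := by ring
      rw [this]; ring
    linarith

lemma Gamma_nat_add_half' (n : ℕ) :
    Real.Gamma ((n:ℝ) + 1/2) = Real.sqrt π * (Nat.factorial (2*n)) / (4^n * (Nat.factorial n)) := by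
  induction n with
  | zero =>
    norm_num
    rw [show ((1:ℝ)/2) = 1/2 from rfl] at *
    simpa using Real.Gamma_one_half_eq
  | succ m ih =>
    have h1 : ((m+1 : ℕ):ℝ) + 1/2 = ((m:ℝ) + 1/2) + 1 := by push_cast; ring
    rw [h1, Real.Gamma_add_one (by positivity), ih]
    have h2 : (2*(m+1)) = (2*m) + 1 + 1 := by ring
    rw [h2]
    have e1 : ((Nat.factorial (2*m+1+1)) : ℝ)
        = (2*(m:ℝ)+2) * (2*(m:ℝ)+1) * ((Nat.factorial (2*m)) : ℝ) := by
      rw [Nat.factorial_succ, Nat.factorial_succ]; push_cast; ring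
    have e3 : ((Nat.factorial (m+1)) : ℝ) = ((m:ℝ)+1) * ((Nat.factorial m) : ℝ) := by
      rw [Nat.factorial_succ]; push_cast; ring
    rw [e1, e3]
    have h3 : ((4:ℝ)^(m+1)) = 4 * 4^m := by ring
    rw [h3]
    have hm : ((Nat.factorial m) : ℝ) ≠ 0 := by positivity
    have h4 : ((m:ℝ)+1) ≠ 0 := by positivity
    have h5 : ((4:ℝ)^m) ≠ 0 := by positivity
    field_simp
    ring

lemma factorial_stirling (n : ℕ) (hn : n ≠ 0) :
    ((Nat.factorial n) : ℝ) = stirlingSeq n * Real.sqrt (2*n) * ((n:ℝ)/Real.exp 1)^n := by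
  have h1 : (0:ℝ) < n := by exact_mod_cast Nat.pos_of_ne_zero hn
  have h2 : (0:ℝ) < Real.sqrt (2*n) := Real.sqrt_pos.mpr (by linarith)
  have h3 : (0:ℝ) < ((n:ℝ)/Real.exp 1)^n := by positivity
  rw [stirlingSeq]
  field_simp

set_option maxHeartbeats 1000000 in
lemma key_gamma (k : ℕ) (hk : 1 ≤ k) :
    Real.sqrt (π*k) * ((k:ℝ)/(2*Real.exp 1))^((k:ℝ)/2) ≤ Real.Gamma ((k:ℝ)/2 + 1) := by
  rcases Nat.even_or_odd k with ⟨n, hn⟩ | ⟨j, hj⟩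
  · -- even case, k = 2n, n ≥ 1
    have hn1 : 1 ≤ n := by omega
    have hN : (1:ℝ) ≤ (n:ℝ) := by exact_mod_cast hn1
    have hN0 : (0:ℝ) < n := by linarith
    have hkr : (k:ℝ) = 2*(n:ℝ) := by rw [hn]; push_cast; ring
    rw [hkr]
    have h1 : (2*(n:ℝ))/2 + 1 = (n:ℝ) + 1 := by ring
    rw [h1, Real.Gamma_nat_eq_factorial]
    have h2 : (2*(n:ℝ))/(2*Real.exp 1) = (n:ℝ)/Real.exp 1 := by
      rw [mul_div_mul_left _ _ (two_ne_zero)]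
    have h3 : (2*(n:ℝ))/2 = (n:ℝ) := by ring
    rw [h2, h3, Real.rpow_natCast]
    rw [factorial_stirling n (by omega)]
    have h4 : Real.sqrt (π*(2*(n:ℝ))) = Real.sqrt π * Real.sqrt (2*(n:ℝ)) := by
      rw [← Real.sqrt_mul pi_pos.le]
    rw [h4]
    have h5 : (0:ℝ) ≤ ((n:ℝ)/Real.exp 1)^n := by positivity
    have h6 : (0:ℝ) ≤ Real.sqrt (2*(n:ℝ)) := Real.sqrt_nonneg _
    obtain ⟨j, rfl⟩ : ∃ j, n = j + 1 := ⟨n-1, by omega⟩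
    have := sqrt_pi_le_stirlingSeq j
    exact mul_le_mul_of_nonneg_right (mul_le_mul_of_nonneg_right this h6) h5
  · -- odd case, k = 2j+1 =: 2m-1 with m = j+1
    set m : ℕ := j + 1 with hm
    have hM1 : (1:ℝ) ≤ (m:ℝ) := by exact_mod_cast Nat.le_add_left 1 j
    set M : ℝ := (m:ℝ) with hMdef
    have hM0 : (0:ℝ) < M := by linarith
    have hMm : ((m:ℝ)) = M := rfl
    have hkr : (k:ℝ) = 2*M - 1 := by rw [← hMm, hm, hj]; push_cast; ring
    have hK0 : (0:ℝ) < 2*M - 1 := by linarith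
    have hhalf : (k:ℝ)/2 + 1 = (M:ℝ) + 1/2 := by rw [hkr]; ring
    rw [hhalf, Gamma_nat_add_half', hkr]
    -- atoms
    set A : ℝ := Real.log (stirlingSeq m) with hA
    set B : ℝ := Real.log (stirlingSeq (2*m)) with hB
    set Lpi : ℝ := Real.log π with hLpi
    set L2 : ℝ := Real.log 2 with hL2
    set LM : ℝ := Real.log M with hLM
    set LK : ℝ := Real.log (2*M - 1) with hLK
    -- positivity
    have hfmpos : (0:ℝ) < (Nat.factorial m : ℝ) := by exact_mod_cast Nat.factorial_pos m
    have hf2mpos : (0:ℝ) < (Nat.factorial (2*m) : ℝ) := by exact_mod_cast Nat.factorial_pos (2*m)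
    have hLHSpos : (0:ℝ) < Real.sqrt (π*(2*M-1)) * ((2*M-1)/(2*Real.exp 1))^((2*M-1)/2) := by
      have : (0:ℝ) < π*(2*M-1) := by positivity
      have h2 : (0:ℝ) < (2*M-1)/(2*Real.exp 1) := by positivity
      positivity
    have hRHSpos : (0:ℝ) < Real.sqrt π * (Nat.factorial (2*m) : ℝ) / (4^m * (Nat.factorial m : ℝ)) := by
      have := Real.sqrt_pos.mpr pi_pos
      positivity
    rw [← Real.log_le_log_iff hLHSpos hRHSpos]
    -- fact 1 : telescoping
    have fact1 : A - B ≤ 1/(8*M) := by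
      have := stirling_telescope j m
      have e1 : j + 1 + m = 2*m := by omega
      rw [e1] at this
      have e2 : ((j:ℝ)+1) = M := by rw [hMdef, hm]; push_cast; ring
      rw [e2] at this
      have e3 : 1/4 * (1/M - 1/(M + (m:ℝ))) = 1/(8*M) := by
        rw [hMm]; field_simp; ring
      calc A - B ≤ 1/4 * (1/M - 1/(M + (m:ℝ))) := this
        _ = 1/(8*M) := e3
    -- fact 2 : Padé
    have fact2 : 1/(8*M) ≤ M * (L2 + LM - LK) - 1/2 := by
      have hu : (0:ℝ) ≤ 1/(2*M-1) := by positivity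
      have hp := pade_log hu
      have e1 : (1:ℝ) + 1/(2*M-1) = (2*M)/(2*M-1) := by field_simp; ring
      rw [e1, Real.log_div (by linarith) (by linarith)] at hp
      have e2 : Real.log (2*M) = L2 + LM := by
        rw [hL2, hLM, ← Real.log_mul two_ne_zero (by linarith)]
      rw [e2] at hp
      -- hp : 2*(1/(2M-1))/(2 + 1/(2M-1)) ≤ L2 + LM - LK
      have hne1 : (2*M-1) ≠ 0 := by linarith
      have hne2 : (4*M-1) ≠ 0 := by intro h; rw [sub_eq_zero] at h; nlinarith
      have hne3 : (2:ℝ) + 1/(2*M-1) ≠ 0 := by positivity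
      have e3 : 2*(1/(2*M-1))/(2 + 1/(2*M-1)) = 2/(4*M - 1) := by
        rw [div_eq_div_iff hne3 hne2]
        field_simp
        ring
      rw [e3] at hp
      have h4M : (0:ℝ) < 4*M - 1 := by linarith
      have e4 : M * (2/(4*M-1)) - 1/2 - 1/(8*M) = 1/(8*M*(4*M-1)) := by
        rw [mul_div_assoc', div_sub_div _ _ h4M.ne' two_ne_zero, div_sub_div _ _ (by positivity) (by positivity), div_eq_div_iff (by positivity) (by positivity)]
        ring
      have e5 : (0:ℝ) < 1/(8*M*(4*M-1)) := by
        have : (0:ℝ) < 4*M-1 := by linarith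
        positivity
      have e6 := mul_le_mul_of_nonneg_left hp hM0.le
      rw [hLK]
      linarith
    -- log expansions
    have hfm : Real.log (Nat.factorial m : ℝ) = A + 1/2*(L2 + LM) + M*(LM - 1) := by
      have hf := log_stirlingSeq_formula m
      have e1 : Real.log (2*(m:ℝ)) = L2 + LM := by
        rw [hL2, hLM, hMdef, ← Real.log_mul two_ne_zero (by positivity)]
      have e2 : Real.log ((m:ℝ)/Real.exp 1) = LM - 1 := by
        rw [Real.log_div (by positivity) (Real.exp_ne_zero 1), Real.log_exp, hLM, hMdef]
      rw [e1, e2] at hf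
      rw [hA] at *
      linarith [hf]
    have hK0' : (2*M-1) ≠ 0 := ne_of_gt hK0
    have hf2m : Real.log (Nat.factorial (2*m) : ℝ) = B + 1/2*(L2 + (L2 + LM)) + (2*M)*((L2 + LM) - 1) := by
      have hf := log_stirlingSeq_formula (2*m)
      have hc : ((2*m:ℕ):ℝ) = 2*M := by rw [← hMm]; push_cast; ring
      rw [hc] at hf
      have h2M : (2*M) ≠ 0 := by positivity
      have e1 : Real.log (2*(2*M)) = L2 + (L2 + LM) := by
        rw [Real.log_mul two_ne_zero h2M, Real.log_mul two_ne_zero hM0.ne', hL2, hLM]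
      have e2 : Real.log ((2*M)/Real.exp 1) = (L2 + LM) - 1 := by
        rw [Real.log_div h2M (Real.exp_ne_zero 1), Real.log_exp,
          Real.log_mul two_ne_zero hM0.ne', hL2, hLM]
      rw [e1, e2] at hf
      rw [hB] at *
      linarith [hf]
    have hlog4 : Real.log (4:ℝ) = 2*L2 := by
      rw [show (4:ℝ) = 2^2 by norm_num, Real.log_pow, hL2]; push_cast; ring
    have hsqrtpi : (0:ℝ) < Real.sqrt π := Real.sqrt_pos.mpr pi_pos
    have hR : Real.log (Real.sqrt π * (Nat.factorial (2*m) : ℝ) / (4^m * (Nat.factorial m : ℝ)))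
        = 1/2*Lpi + Real.log (Nat.factorial (2*m) : ℝ)
          - (M*(2*L2) + Real.log (Nat.factorial m : ℝ)) := by
      rw [Real.log_div (by positivity) (by positivity),
        Real.log_mul hsqrtpi.ne' hf2mpos.ne',
        Real.log_mul (by positivity) hfmpos.ne',
        Real.log_sqrt pi_pos.le, Real.log_pow, hlog4, hLpi, hMm]
      ring
    have hL : Real.log (Real.sqrt (π*(2*M-1)) * ((2*M-1)/(2*Real.exp 1))^((2*M-1)/2))
        = 1/2*(Lpi + LK) + ((2*M-1)/2)*(LK - (L2 + 1)) := by
      have hb : (0:ℝ) < (2*M-1)/(2*Real.exp 1) := by positivity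
      rw [Real.log_mul (ne_of_gt (Real.sqrt_pos.mpr (by positivity)))
          (ne_of_gt (Real.rpow_pos_of_pos hb _)),
        Real.log_sqrt (by positivity), Real.log_rpow hb,
        Real.log_mul Real.pi_ne_zero hK0',
        Real.log_div hK0' (by positivity),
        Real.log_mul two_ne_zero (Real.exp_ne_zero 1), Real.log_exp, hLpi, hLK, hL2]
      ring
    rw [hL, hR, hfm, hf2m]
    linarith [fact1, fact2]


/-- lower tail bound for the chi-square distribution: if `V ~ χ²_k`
then `P(V < k/e²) ≤ e^{-k/2}/√(πk)`. -/
theorem chiSq_lower_tail_bound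
    {Ω : Type*} [MeasurableSpace Ω] (P : Measure Ω) [IsProbabilityMeasure P]
    (k : ℕ) (hk : 1 ≤ k)
    (V : Ω → ℝ) (hVmeas : Measurable V)
    (hV : Measure.map V P = gammaMeasure ((k : ℝ) / 2) (1 / 2)) :
    P {ω | V ω < (k : ℝ) / Real.exp 2} ≤
      ENNReal.ofReal (Real.exp (-(k : ℝ) / 2) / Real.sqrt (π * k)) := by
  have hk0 : (0:ℝ) < k := by exact_mod_cast hk
  set a : ℝ := (k:ℝ)/2 with ha
  have ha0 : 0 < a := by positivity
  set t : ℝ := (k:ℝ)/Real.exp 2 with htd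
  have ht0 : 0 < t := by positivity
  have hGa : 0 < Real.Gamma a := Real.Gamma_pos_of_pos ha0
  set C : ℝ := (1/2:ℝ)^a / Real.Gamma a with hC
  have hC0 : 0 < C := by
    have : (0:ℝ) < (1/2:ℝ)^a := Real.rpow_pos_of_pos (by norm_num) a
    positivity
  have hset : {ω | V ω < t} = V ⁻¹' (Set.Iio t) := rfl
  rw [hset, ← Measure.map_apply hVmeas measurableSet_Iio, hV, gammaMeasure,
    MeasureTheory.withDensity_apply _ measurableSet_Iio]
  have hsplit : Set.Iio t = Set.Iio 0 ∪ Set.Ico 0 t := (Set.Iio_union_Ico_eq_Iio ht0.le).symm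
  have hdisj : Disjoint (Set.Iio (0:ℝ)) (Set.Ico 0 t) := by
    rw [Set.disjoint_left]
    intro x hx hx2
    exact absurd hx2.1 (not_le.mpr hx)
  rw [hsplit, lintegral_union measurableSet_Ico hdisj]
  rw [show (∫⁻ x in Set.Iio 0, gammaPDF a (1/2) x) = 0 from lintegral_gammaPDF_of_nonpos le_rfl,
    zero_add]
  rw [← setLIntegral_congr (Ioo_ae_eq_Ico (a := (0:ℝ)) (b := t))]
  -- now bound by C * x^(a-1)
  have hmono : (∫⁻ x in Set.Ioo 0 t, gammaPDF a (1/2) x) ≤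
      ∫⁻ x in Set.Ioo 0 t, ENNReal.ofReal (C * x^(a-1)) := by
    apply setLIntegral_mono (by fun_prop)
    intro x hx
    rw [gammaPDF_of_nonneg hx.1.le]
    apply ENNReal.ofReal_le_ofReal
    have hxp : (0:ℝ) < x := hx.1
    have h1 : Real.exp (-((1/2) * x)) ≤ 1 := Real.exp_le_one_iff.mpr (by nlinarith)
    have h2 : (0:ℝ) ≤ (1/2:ℝ)^a / Real.Gamma a * x^(a-1) := by
      have : (0:ℝ) < (1/2:ℝ)^a := Real.rpow_pos_of_pos (by norm_num) a
      positivity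
    calc (1/2:ℝ)^a / Real.Gamma a * x^(a-1) * Real.exp (-((1/2)*x))
        ≤ (1/2:ℝ)^a / Real.Gamma a * x^(a-1) * 1 := by
          exact mul_le_mul_of_nonneg_left h1 h2
      _ = C * x^(a-1) := by rw [mul_one]
  refine le_trans hmono ?_
  -- compute the integral
  have hint : IntegrableOn (fun x => C * x^(a-1)) (Set.Ioo 0 t) := by
    apply Integrable.const_mul
    have h := intervalIntegral.intervalIntegrable_rpow' (a := 0) (b := t)
      (show (-1:ℝ) < a - 1 by linarith)
    rw [intervalIntegrable_iff_integrableOn_Ioo_of_le ht0.le] at h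
    exact h
  have hnonneg : 0 ≤ᵐ[volume.restrict (Set.Ioo 0 t)] (fun x => C * x^(a-1)) := by
    filter_upwards [ae_restrict_mem measurableSet_Ioo] with x hx
    have : (0:ℝ) < x := hx.1
    positivity
  rw [← MeasureTheory.ofReal_integral_eq_lintegral_ofReal hint hnonneg]
  apply ENNReal.ofReal_le_ofReal
  -- value of the integral
  have hval : ∫ x in Set.Ioo 0 t, C * x^(a-1) = C * (t^a/a) := by
    rw [MeasureTheory.integral_const_mul]
    congr 1
    rw [← MeasureTheory.integral_Ioc_eq_integral_Ioo,
      ← intervalIntegral.integral_of_le ht0.le]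
    rw [integral_rpow (Or.inl (by linarith))]
    rw [Real.zero_rpow (by linarith : a - 1 + 1 ≠ 0)]
    rw [show a - 1 + 1 = a by ring]
    ring
  rw [hval]
  -- final inequality
  have hkey := key_gamma k hk
  have hsq : (0:ℝ) < Real.sqrt (π*k) := Real.sqrt_pos.mpr (by positivity)
  have hX : (0:ℝ) < (k:ℝ)/(2*Real.exp 1) := by positivity
  have hXa : (0:ℝ) < ((k:ℝ)/(2*Real.exp 1))^((k:ℝ)/2) := Real.rpow_pos_of_pos hX _
  have hGa1 : (0:ℝ) < Real.Gamma (a+1) := Real.Gamma_pos_of_pos (by linarith)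
  -- C * (t^a/a) = (t/2)^a / Gamma (a+1)
  have he2 : Real.exp 2 = Real.exp 1 * Real.exp 1 := by
    rw [← Real.exp_add]; norm_num
  have ht2 : t/2 = (Real.exp 1)⁻¹ * ((k:ℝ)/(2*Real.exp 1)) := by
    rw [htd, he2]
    field_simp
  have hCt : C * (t^a/a) = ((Real.exp 1)⁻¹)^a * ((k:ℝ)/(2*Real.exp 1))^a / Real.Gamma (a+1) := by
    rw [Real.Gamma_add_one ha0.ne']
    rw [← Real.mul_rpow (by positivity) hX.le, ← ht2]
    rw [hC]
    rw [show t/2 = t * (1/2) by ring, Real.mul_rpow ht0.le (by norm_num)]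
    field_simp
  rw [hCt]
  have hea : ((Real.exp 1)⁻¹)^a = Real.exp (-(k:ℝ)/2) := by
    rw [Real.inv_rpow (Real.exp_pos 1).le, Real.exp_one_rpow, ← Real.exp_neg, ha, neg_div]
  rw [hea]
  rw [← ha] at hkey
  rw [div_le_div_iff₀ hGa1 hsq]
  have hmul := mul_le_mul_of_nonneg_left hkey (Real.exp_pos (-(k:ℝ)/2)).le
  nlinarith [hmul, Real.exp_pos (-(k:ℝ)/2)]
end

section
/- Let A be an n×m real matrix with AᵀA invertible, set H := A(AᵀA)⁻¹Aᵀ, and let y ∈ ℝⁿ, β ∈ ℝ^m, σ > 0. Let B be the n×(m+1) real matrix whose first m columns are the columns of A and whose last column is (y − Aβ)/σ. Then √(det(BᵀB)) = σ⁻¹·√(det(AᵀA))·√(yᵀ(I_n − H)y). (This is the generalized fiducial Jacobian J(y,(β,σ)) = σ⁻¹·|det(X_MᵀX_M)|^{1/2}·RSS_M^{1/2} for the linear model data generating equation.) -/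
open Matrix

/-- the generalized fiducial Jacobian for the linear model:
if `B = [A ∣ (y - Aβ)/σ]` then `√det(BᵀB) = σ⁻¹ √det(AᵀA) √(yᵀ(I-H)y)`. -/
theorem fiducial_jacobian
    (n m : ℕ) (A : Matrix (Fin n) (Fin m) ℝ) (hA : IsUnit (Aᵀ * A).det)
    (H : Matrix (Fin n) (Fin n) ℝ) (hH : H = A * (Aᵀ * A)⁻¹ * Aᵀ)
    (y : Fin n → ℝ) (β : Fin m → ℝ) (σ : ℝ) (hσ : 0 < σ)
    (B : Matrix (Fin n) (Fin (m + 1)) ℝ)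
    (hB : ∀ i j, B i j =
      Fin.lastCases (motive := fun _ => ℝ)
        ((y i - (A *ᵥ β) i) / σ) (fun j' => A i j') j) :
    Real.sqrt (Bᵀ * B).det =
      σ⁻¹ * Real.sqrt (Aᵀ * A).det * Real.sqrt (y ⬝ᵥ (1 - H) *ᵥ y) := by
  classical
  set r : Fin n → ℝ := fun i => (y i - (A *ᵥ β) i) / σ with hr
  -- B as a column-partitioned matrix
  set C : Matrix (Fin n) (Fin m ⊕ Fin 1) ℝ := fromCols A (Matrix.replicateCol (Fin 1) r) with hC
  have hBC : B = C.submatrix id finSumFinEquiv.symm := by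
    ext i j
    rw [hB]
    refine Fin.lastCases ?_ (fun j' => ?_) j
    · rw [Fin.lastCases_last]
      simp [finSumFinEquiv_symm_last, hC, fromCols, Matrix.replicateCol, hr]
    · rw [Fin.lastCases_castSucc]
      have e : finSumFinEquiv.symm (j'.castSucc) = Sum.inl j' :=
        finSumFinEquiv_symm_apply_castAdd j'
      simp [e, hC, fromCols]
  -- invertibility of AᵀA
  haveI : Invertible (Aᵀ * A) := (Aᵀ * A).invertibleOfIsUnitDet hA
  -- key algebraic facts about H
  have hHA : H * A = A := by
    rw [hH, Matrix.mul_assoc, Matrix.mul_assoc, Matrix.nonsing_inv_mul _ hA,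
      Matrix.mul_one]
  have hHsymm : Hᵀ = H := by
    rw [hH]
    simp only [Matrix.transpose_mul, Matrix.transpose_transpose]
    rw [Matrix.transpose_nonsing_inv]
    simp only [Matrix.transpose_mul, Matrix.transpose_transpose]
    rw [Matrix.mul_assoc]
  -- determinant computation via Schur complement
  have hdet : (Bᵀ * B).det = (Aᵀ * A).det * (r ⬝ᵥ (1 - H) *ᵥ r) := by
    have hsub : Bᵀ * B = (Cᵀ * C).submatrix finSumFinEquiv.symm finSumFinEquiv.symm := by
      rw [hBC]
      ext i j
      simp [Matrix.mul_apply]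
    rw [hsub, Matrix.det_submatrix_equiv_self]
    rw [hC, transpose_fromCols, fromRows_mul_fromCols, det_fromBlocks₁₁]
    congr 1
    have h2 : (Matrix.replicateCol (Fin 1) r)ᵀ = Matrix.replicateRow (Fin 1) r := rfl
    have hinv : (⅟(Aᵀ * A) : Matrix (Fin m) (Fin m) ℝ) = (Aᵀ * A)⁻¹ :=
      (Matrix.invOf_eq_nonsing_inv _)
    rw [h2, hinv, Matrix.det_fin_one, Matrix.sub_apply, replicateRow_mul_replicateCol_apply,
      ← replicateCol_mulVec, ← Matrix.replicateRow_vecMul, ← Matrix.replicateRow_vecMul, replicateRow_mul_replicateCol_apply, hH]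
    simp only [Matrix.dotProduct_mulVec, Matrix.vecMul_vecMul]
    rw [Matrix.vecMul_sub, Matrix.vecMul_one, sub_dotProduct]
  -- rewrite r-quadratic form in terms of y
  have hPA : (1 - H) * A = 0 := by
    rw [Matrix.sub_mul, Matrix.one_mul, hHA, sub_self]
  have hPAβ : (1 - H) *ᵥ (A *ᵥ β) = 0 := by
    rw [Matrix.mulVec_mulVec, hPA, Matrix.zero_mulVec]
  have hPsymm : (1 - H)ᵀ = 1 - H := by
    rw [Matrix.transpose_sub, Matrix.transpose_one, hHsymm]
  have hquad : r ⬝ᵥ (1 - H) *ᵥ r = σ⁻¹ ^ 2 * (y ⬝ᵥ (1 - H) *ᵥ y) := by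
    have hrv : r = σ⁻¹ • (y - A *ᵥ β) := by
      ext i; simp [hr, div_eq_inv_mul, Pi.sub_apply, mul_comm]
    rw [hrv, Matrix.mulVec_smul, dotProduct_smul, smul_dotProduct]
    have : (1 - H) *ᵥ (y - A *ᵥ β) = (1 - H) *ᵥ y := by
      rw [Matrix.mulVec_sub, hPAβ, sub_zero]
    rw [this]
    have hleft : (y - A *ᵥ β) ⬝ᵥ (1 - H) *ᵥ y = y ⬝ᵥ (1 - H) *ᵥ y := by
      rw [sub_dotProduct]
      have : (A *ᵥ β) ⬝ᵥ (1 - H) *ᵥ y = ((1 - H) *ᵥ (A *ᵥ β)) ⬝ᵥ y := by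
        rw [Matrix.dotProduct_mulVec, ← hPsymm, Matrix.vecMul_transpose, hPsymm]
      rw [this, hPAβ, zero_dotProduct, sub_zero]
    rw [hleft, smul_eq_mul, smul_eq_mul, sq]
    ring
  -- nonnegativity of det(AᵀA)
  have hATA : (Aᵀ * A).PosSemidef := by
    have := Matrix.posSemidef_conjTranspose_mul_self A
    simpa using this
  have hdetnn : 0 ≤ (Aᵀ * A).det := by
    rw [hATA.isHermitian.det_eq_prod_eigenvalues]
    exact Finset.prod_nonneg fun i _ => hATA.eigenvalues_nonneg i
  -- conclude
  rw [hdet, hquad, Real.sqrt_mul hdetnn, Real.sqrt_mul (by positivity),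
    Real.sqrt_sq (by positivity)]
  ring
end

section
/- Let A be an n×m real matrix with m < n and AᵀA invertible (positive definite), set H := A(AᵀA)⁻¹Aᵀ, and let y ∈ ℝⁿ with RSS := yᵀ(I_n − H)y > 0. Then ∫_{ℝ^m} ∫_0^∞ σ^{−(n+1)}·exp( −‖y − Aβ‖₂²/(2σ²) )·√(det(AᵀA))·√(RSS) dσ dβ = 2^{(n−2)/2}·π^{m/2}·Γ((n−m)/2)·RSS^{−(n−m−1)/2}, where Γ is the Gamma function. (This computes the normalizing constant of the generalized fiducial density of (β,σ) in the linear model, without the admissibility factor.) -/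
open MeasureTheory Matrix Real Set

namespace Matrix.PosSemidef
open scoped MatrixOrder

noncomputable def sqrt {ι : Type*} [Fintype ι] [DecidableEq ι] {M : Matrix ι ι ℝ}
    (_ : M.PosSemidef) : Matrix ι ι ℝ := CFC.sqrt M

lemma sqrt_mul_self {ι : Type*} [Fintype ι] [DecidableEq ι] {M : Matrix ι ι ℝ}
    (hM : M.PosSemidef) : hM.sqrt * hM.sqrt = M :=
  CFC.sqrt_mul_sqrt_self M hM.nonneg

lemma posSemidef_sqrt {ι : Type*} [Fintype ι] [DecidableEq ι] {M : Matrix ι ι ℝ}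
    (hM : M.PosSemidef) : hM.sqrt.PosSemidef :=
  (CFC.sqrt_nonneg M).posSemidef

end Matrix.PosSemidef

lemma dot_mulVec_left {n m : ℕ} (C : Matrix (Fin n) (Fin m) ℝ) (v : Fin m → ℝ) (w : Fin n → ℝ) :
    (C *ᵥ v) ⬝ᵥ w = v ⬝ᵥ (Cᵀ *ᵥ w) := by
  rw [dotProduct_comm, dotProduct_mulVec, dotProduct_comm, mulVec_transpose]

lemma key_alg (n m : ℕ)
    (A : Matrix (Fin n) (Fin m) ℝ) (hA : (Aᵀ * A).PosDef)
    (y : Fin n → ℝ) (β : Fin m → ℝ) :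
    ∑ i, (y i - (A *ᵥ β) i) ^ 2 =
      y ⬝ᵥ (1 - A * (Aᵀ * A)⁻¹ * Aᵀ) *ᵥ y +
      (hA.posSemidef.sqrt *ᵥ (β - (Aᵀ * A)⁻¹ *ᵥ (Aᵀ *ᵥ y))) ⬝ᵥ
        (hA.posSemidef.sqrt *ᵥ (β - (Aᵀ * A)⁻¹ *ᵥ (Aᵀ *ᵥ y))) := by
  set M := Aᵀ * A with hM
  set B := hA.posSemidef.sqrt with hB
  set H := A * M⁻¹ * Aᵀ with hHdef
  have hdet : IsUnit M.det := isUnit_iff_ne_zero.mpr (ne_of_gt hA.det_pos)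
  have hMi : M * M⁻¹ = 1 := Matrix.mul_nonsing_inv M hdet
  have hMsymm : Mᵀ = M := by rw [hM, Matrix.transpose_mul, Matrix.transpose_transpose]
  have hMisymm : (M⁻¹)ᵀ = M⁻¹ := by rw [Matrix.transpose_nonsing_inv, hMsymm]
  have hBsymm : Bᵀ = B := hA.posSemidef.posSemidef_sqrt.1
  have hBB : B * B = M := hA.posSemidef.sqrt_mul_self
  set v : Fin m → ℝ := β - M⁻¹ *ᵥ (Aᵀ *ᵥ y) with hv
  have hAH : Aᵀ * H = Aᵀ := by
    rw [hHdef]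
    simp only [← Matrix.mul_assoc]
    rw [← hM, hMi, Matrix.one_mul]
  have hAtH : Aᵀ * (1 - H) = 0 := by
    rw [Matrix.mul_sub, Matrix.mul_one, hAH, sub_self]
  have hHsymm : (1 - H)ᵀ = 1 - H := by
    rw [Matrix.transpose_sub, Matrix.transpose_one, hHdef, Matrix.transpose_mul,
      Matrix.transpose_mul, Matrix.transpose_transpose, hMisymm, Matrix.mul_assoc]
  have hH0 : H * (1 - H) = 0 := by
    nth_rewrite 1 [hHdef]
    rw [Matrix.mul_assoc, hAtH, Matrix.mul_zero]
  have hHidem : (1 - H) * (1 - H) = 1 - H := by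
    rw [Matrix.sub_mul, Matrix.one_mul, hH0, sub_zero]
  have hsplit : y - A *ᵥ β = (1 - H) *ᵥ y - A *ᵥ v := by
    rw [hv, Matrix.mulVec_sub, Matrix.sub_mulVec, Matrix.one_mulVec,
      Matrix.mulVec_mulVec, Matrix.mulVec_mulVec, ← hHdef]
    abel
  have hLHS : ∑ i, (y i - (A *ᵥ β) i) ^ 2 = (y - A *ᵥ β) ⬝ᵥ (y - A *ᵥ β) := by
    simp [dotProduct, Pi.sub_apply, pow_two]
  rw [hLHS, hsplit]
  set u := (1 - H) *ᵥ y with hu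
  set w := A *ᵥ v with hw
  have s2 : w ⬝ᵥ u = 0 := by
    rw [hw, hu, dot_mulVec_left, Matrix.mulVec_mulVec, hAtH, Matrix.zero_mulVec,
      dotProduct_zero]
  have s2' : u ⬝ᵥ w = 0 := by rw [dotProduct_comm, s2]
  have s1 : u ⬝ᵥ u = y ⬝ᵥ (1 - H) *ᵥ y := by
    rw [hu, dot_mulVec_left, hHsymm, Matrix.mulVec_mulVec, hHidem]
  have s3 : w ⬝ᵥ w = (B *ᵥ v) ⬝ᵥ (B *ᵥ v) := by
    rw [hw, dot_mulVec_left, Matrix.mulVec_mulVec, ← hM,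
      dot_mulVec_left, Matrix.mulVec_mulVec, hBsymm, hBB]
  rw [sub_dotProduct, dotProduct_sub, dotProduct_sub, s1, s2, s2', s3]
  ring

section gauss
variable {m : ℕ}

lemma cont_h (b : ℝ) : Continuous fun w : Fin m → ℝ => Real.exp (-b * (w ⬝ᵥ w)) := by
  refine Real.continuous_exp.comp (continuous_const.mul ?_)
  exact continuous_finset_sum _ fun i _ => (continuous_apply i).mul (continuous_apply i)

lemma integrable_h {b : ℝ} (hb : 0 < b) :
    Integrable (fun w : Fin m → ℝ => Real.exp (-b * (w ⬝ᵥ w))) := by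
  have : (fun w : Fin m → ℝ => Real.exp (-b * (w ⬝ᵥ w)))
      = fun w : Fin m → ℝ => ∏ i, Real.exp (-b * (w i ^ 2)) := by
    funext w
    rw [← Real.exp_sum]
    congr 1
    rw [dotProduct, Finset.mul_sum]
    exact Finset.sum_congr rfl fun i _ => by ring
  rw [this]
  exact Integrable.fintype_prod (f := fun _ x => Real.exp (-b * x ^ 2))
    (fun i => integrable_exp_neg_mul_sq hb)

lemma integral_h {b : ℝ} (hb : 0 < b) :
    ∫ w : Fin m → ℝ, Real.exp (-b * (w ⬝ᵥ w)) = Real.sqrt (π / b) ^ m := by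
  have : (fun w : Fin m → ℝ => Real.exp (-b * (w ⬝ᵥ w)))
      = fun w : Fin m → ℝ => ∏ i, Real.exp (-b * (w i ^ 2)) := by
    funext w
    rw [← Real.exp_sum]
    congr 1
    rw [dotProduct, Finset.mul_sum]
    exact Finset.sum_congr rfl fun i _ => by ring
  rw [this, MeasureTheory.volume_pi, MeasureTheory.integral_fintype_prod_eq_pow (ι := Fin m)
    (fun x : ℝ => Real.exp (-b * x ^ 2)), integral_gaussian]
  simp

lemma gauss_pi_integral {b : ℝ} (hb : 0 < b) (B : Matrix (Fin m) (Fin m) ℝ)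
    (hdet : B.det ≠ 0) :
    ∫ v : Fin m → ℝ, Real.exp (-b * ((B *ᵥ v) ⬝ᵥ (B *ᵥ v))) =
      |B.det|⁻¹ * Real.sqrt (π / b) ^ m := by
  have hld : LinearMap.det (Matrix.toLin' B) ≠ 0 := by rwa [LinearMap.det_toLin']
  have hmap : Measure.map (⇑(Matrix.toLin' B)) volume
      = ENNReal.ofReal |B.det|⁻¹ • volume := by
    have := Real.map_linearMap_volume_pi_eq_smul_volume_pi hld
    rwa [LinearMap.det_toLin', abs_inv] at this
  have hcont := cont_h (m := m) b
  calc ∫ v : Fin m → ℝ, Real.exp (-b * ((B *ᵥ v) ⬝ᵥ (B *ᵥ v)))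
      = ∫ v : Fin m → ℝ, (fun w => Real.exp (-b * (w ⬝ᵥ w))) ((Matrix.toLin' B) v) := by
        simp_rw [Matrix.toLin'_apply]
    _ = ∫ w : Fin m → ℝ, Real.exp (-b * (w ⬝ᵥ w)) ∂(Measure.map (⇑(Matrix.toLin' B)) volume) :=
        (integral_map (Measurable.aemeasurable (by fun_prop)) hcont.aestronglyMeasurable).symm
    _ = |B.det|⁻¹ * Real.sqrt (π / b) ^ m := by
        rw [hmap, integral_smul_measure, ENNReal.toReal_ofReal (by positivity),
          integral_h hb, smul_eq_mul]

end gauss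

lemma gauss_pi_integrable {b : ℝ} (hb : 0 < b) (B : Matrix (Fin m) (Fin m) ℝ)
    (hdet : B.det ≠ 0) :
    Integrable (fun v : Fin m → ℝ => Real.exp (-b * ((B *ᵥ v) ⬝ᵥ (B *ᵥ v)))) := by
  have hld : LinearMap.det (Matrix.toLin' B) ≠ 0 := by rwa [LinearMap.det_toLin']
  have hmap : Measure.map (⇑(Matrix.toLin' B)) volume
      = ENNReal.ofReal |B.det|⁻¹ • volume := by
    have := Real.map_linearMap_volume_pi_eq_smul_volume_pi hld
    rwa [LinearMap.det_toLin', abs_inv] at this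
  let e : (Fin m → ℝ) ≃ₗ[ℝ] (Fin m → ℝ) :=
    Matrix.toLinearEquiv' B (B.invertibleOfIsUnitDet (isUnit_iff_ne_zero.mpr hdet))
  have hcoe : ⇑e = ⇑(Matrix.toLin' B) := rfl
  have hemb : MeasurableEmbedding (⇑(Matrix.toLin' B)) := by
    rw [← hcoe]
    exact e.toContinuousLinearEquiv.toHomeomorph.measurableEmbedding
  have hInt : Integrable (fun w : Fin m → ℝ => Real.exp (-b * (w ⬝ᵥ w)))
      (Measure.map (⇑(Matrix.toLin' B)) volume) := by
    rw [hmap]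
    exact (integrable_h hb).smul_measure ENNReal.ofReal_ne_top
  have := (hemb.integrable_map_iff).mp hInt
  simpa [Function.comp_def, Matrix.toLin'_apply] using this

lemma aux_pt {k a x : ℝ} (hx : 0 < x) :
    (|(-1:ℝ)| * x ^ ((-1:ℝ) - 1)) • ((x ^ (-1:ℝ)) ^ (k-1) * Real.exp (-a * (x ^ (-1:ℝ)) ^ (2:ℝ)))
      = x ^ (-(k+1)) * Real.exp (-a * x ^ (-2:ℝ)) := by
  have hx0 : (0:ℝ) ≤ x := hx.le
  rw [← Real.rpow_mul hx0, ← Real.rpow_mul hx0, smul_eq_mul, abs_neg, abs_one, one_mul,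
    ← mul_assoc, ← Real.rpow_add hx]
  norm_num
  ring_nf

lemma aux_integral_inv_sq {k a : ℝ} (hk : 0 < k) (ha : 0 < a) :
    ∫ σ in Ioi (0:ℝ), σ ^ (-(k+1)) * Real.exp (-a * σ ^ (-2:ℝ)) =
      a ^ (-k/2) * (1/2) * Real.Gamma (k/2) := by
  have h := integral_comp_rpow_Ioi (fun u : ℝ => u ^ (k-1) * Real.exp (-a * u ^ (2:ℝ)))
      (p := -1) (by norm_num)
  have h2 : ∫ u in Ioi (0:ℝ), u ^ (k-1) * Real.exp (-a * u ^ (2:ℝ)) =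
      a ^ (-(k-1+1)/2) * (1/2) * Real.Gamma ((k-1+1)/2) :=
    integral_rpow_mul_exp_neg_mul_rpow two_pos (by linarith) ha
  rw [setIntegral_congr_fun measurableSet_Ioi
      (fun x (hx : x ∈ Ioi (0:ℝ)) => (aux_pt (k := k) (a := a) hx).symm), h, h2]
  norm_num

lemma aux_integrable_inv_sq {k a : ℝ} (hk : 0 < k) (ha : 0 < a) :
    IntegrableOn (fun σ : ℝ => σ ^ (-(k+1)) * Real.exp (-a * σ ^ (-2:ℝ))) (Ioi 0) := by
  have h := (integrableOn_Ioi_comp_rpow_iff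
      (fun u : ℝ => u ^ (k-1) * Real.exp (-a * u ^ (2:ℝ))) (p := (-1:ℝ)) (by norm_num)).mpr
      (integrableOn_rpow_mul_exp_neg_mul_rpow (by linarith) two_pos ha)
  refine h.congr_fun (fun x hx => aux_pt (k := k) (a := a) hx) measurableSet_Ioi

/-- the normalizing constant of the generalized fiducial density of
`(β, σ)` in the linear model (without the admissibility factor):
`∫∫ σ^{-(n+1)} e^{-‖y-Aβ‖²/(2σ²)} √det(AᵀA) √RSS dσ dβ
  = 2^{(n-2)/2} π^{m/2} Γ((n-m)/2) RSS^{-(n-m-1)/2}`. -/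
theorem fiducial_normalizing_constant
    (n m : ℕ) (hmn : m < n)
    (A : Matrix (Fin n) (Fin m) ℝ) (hA : (Aᵀ * A).PosDef)
    (H : Matrix (Fin n) (Fin n) ℝ) (hH : H = A * (Aᵀ * A)⁻¹ * Aᵀ)
    (y : Fin n → ℝ) (RSS : ℝ) (hRSS : RSS = y ⬝ᵥ (1 - H) *ᵥ y) (hpos : 0 < RSS) :
    (∫ β : Fin m → ℝ, ∫ σ in Set.Ioi (0 : ℝ),
        σ ^ (-((n : ℝ) + 1)) *
          Real.exp (-(∑ i, (y i - (A *ᵥ β) i) ^ 2) / (2 * σ ^ 2)) *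
          Real.sqrt (Aᵀ * A).det * Real.sqrt RSS) =
      2 ^ (((n : ℝ) - 2) / 2) * π ^ ((m : ℝ) / 2) *
        Real.Gamma (((n : ℝ) - m) / 2) * RSS ^ (-(((n : ℝ) - m - 1) / 2)) := by
  have hMdetpos : 0 < (Aᵀ * A).det := hA.det_pos
  set B := hA.posSemidef.sqrt with hBdef
  have hBB : B * B = Aᵀ * A := hA.posSemidef.sqrt_mul_self
  have hMdet_eq : (Aᵀ * A).det = B.det ^ 2 := by
    have h := congrArg Matrix.det hBB
    rw [Matrix.det_mul] at h
    rw [← h]; ring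
  have hBdet_nonneg : 0 ≤ B.det := by
    have hs := hA.posSemidef.posSemidef_sqrt
    rw [hs.1.det_eq_prod_eigenvalues]
    exact Finset.prod_nonneg fun i _ => hs.eigenvalues_nonneg i
  have hBdet_pos : 0 < B.det := by
    rcases hBdet_nonneg.lt_or_eq with h | h
    · exact h
    · exfalso; rw [hMdet_eq, ← h] at hMdetpos; simp at hMdetpos
  have hBdet_sqrt : Real.sqrt (Aᵀ * A).det = B.det := by
    rw [hMdet_eq, Real.sqrt_sq hBdet_nonneg]
  set βh := (Aᵀ * A)⁻¹ *ᵥ (Aᵀ *ᵥ y) with hβh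
  have hkey : ∀ β : Fin m → ℝ, ∑ i, (y i - (A *ᵥ β) i) ^ 2
      = RSS + (B *ᵥ (β - βh)) ⬝ᵥ (B *ᵥ (β - βh)) := by
    intro β
    rw [key_alg n m A hA y β, ← hH, ← hRSS]
  set k : ℝ := (n : ℝ) - m with hk
  have hkpos : 0 < k := by
    rw [hk]; have : (m : ℝ) < n := by exact_mod_cast hmn
    linarith
  set f : (Fin m → ℝ) → ℝ → ℝ := fun β σ =>
      σ ^ (-((n : ℝ) + 1)) *
        Real.exp (-(∑ i, (y i - (A *ᵥ β) i) ^ 2) / (2 * σ ^ 2)) *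
        Real.sqrt (Aᵀ * A).det * Real.sqrt RSS with hf
  -- pointwise rewriting of f for σ > 0
  have hptw : ∀ σ : ℝ, 0 < σ → ∀ β : Fin m → ℝ,
      f β σ = (σ ^ (-((n : ℝ) + 1)) * Real.sqrt (Aᵀ * A).det * Real.sqrt RSS *
          Real.exp (-((2 * σ ^ 2)⁻¹ * RSS))) *
        Real.exp (-((2 * σ ^ 2)⁻¹) * ((B *ᵥ (β - βh)) ⬝ᵥ (B *ᵥ (β - βh)))) := by
    intro σ hσ β
    rw [hf]
    simp only
    rw [hkey β]
    have h2 : -((RSS + (B *ᵥ (β - βh)) ⬝ᵥ (B *ᵥ (β - βh)))) / (2 * σ ^ 2)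
        = -((2 * σ ^ 2)⁻¹ * RSS) + -((2 * σ ^ 2)⁻¹) * ((B *ᵥ (β - βh)) ⬝ᵥ (B *ᵥ (β - βh))) := by
      field_simp
      ring
    rw [h2, Real.exp_add]
    ring
  -- value of the inner β-integral for σ > 0
  have hgval : ∀ σ ∈ Ioi (0:ℝ), (∫ β : Fin m → ℝ, f β σ)
      = (Real.sqrt RSS * Real.sqrt (2 * π) ^ m) *
        (σ ^ (-(k + 1)) * Real.exp (-(RSS / 2) * σ ^ (-2 : ℝ))) := by
    intro σ hσ
    have hσ' : (0:ℝ) < σ := hσ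
    have hb : (0:ℝ) < (2 * σ ^ 2)⁻¹ := by positivity
    calc ∫ β : Fin m → ℝ, f β σ
        = ∫ β : Fin m → ℝ, (σ ^ (-((n : ℝ) + 1)) * Real.sqrt (Aᵀ * A).det * Real.sqrt RSS *
            Real.exp (-((2 * σ ^ 2)⁻¹ * RSS))) *
          Real.exp (-((2 * σ ^ 2)⁻¹) * ((B *ᵥ (β - βh)) ⬝ᵥ (B *ᵥ (β - βh)))) := by
          exact integral_congr_ae (Filter.Eventually.of_forall (fun β => hptw σ hσ' β))
      _ = (σ ^ (-((n : ℝ) + 1)) * Real.sqrt (Aᵀ * A).det * Real.sqrt RSS *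
            Real.exp (-((2 * σ ^ 2)⁻¹ * RSS))) *
          ∫ β : Fin m → ℝ, Real.exp (-((2 * σ ^ 2)⁻¹) * ((B *ᵥ (β - βh)) ⬝ᵥ (B *ᵥ (β - βh)))) := by
          rw [integral_const_mul]
      _ = (σ ^ (-((n : ℝ) + 1)) * Real.sqrt (Aᵀ * A).det * Real.sqrt RSS *
            Real.exp (-((2 * σ ^ 2)⁻¹ * RSS))) *
          ∫ v : Fin m → ℝ, Real.exp (-((2 * σ ^ 2)⁻¹) * ((B *ᵥ v) ⬝ᵥ (B *ᵥ v))) := by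
          rw [integral_sub_right_eq_self
            (fun v => Real.exp (-((2 * σ ^ 2)⁻¹) * ((B *ᵥ v) ⬝ᵥ (B *ᵥ v)))) βh]
      _ = (σ ^ (-((n : ℝ) + 1)) * Real.sqrt (Aᵀ * A).det * Real.sqrt RSS *
            Real.exp (-((2 * σ ^ 2)⁻¹ * RSS))) *
          (|B.det|⁻¹ * Real.sqrt (π / (2 * σ ^ 2)⁻¹) ^ m) := by
          rw [gauss_pi_integral hb B (ne_of_gt hBdet_pos)]
      _ = (Real.sqrt RSS * Real.sqrt (2 * π) ^ m) *
          (σ ^ (-(k + 1)) * Real.exp (-(RSS / 2) * σ ^ (-2 : ℝ))) := by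
          have e1 : |B.det| = B.det := abs_of_pos hBdet_pos
          have e2 : π / (2 * σ ^ 2)⁻¹ = (2 * π) * σ ^ 2 := by field_simp
          have e3 : Real.sqrt ((2 * π) * σ ^ 2) = Real.sqrt (2 * π) * σ := by
            rw [Real.sqrt_mul (by positivity), Real.sqrt_sq hσ'.le]
          have e4 : -((2 * σ ^ 2)⁻¹ * RSS) = -(RSS / 2) * σ ^ (-2 : ℝ) := by
            rw [show (-2 : ℝ) = -(2:ℕ) by norm_num, Real.rpow_neg hσ'.le, Real.rpow_natCast]
            field_simp
          have e5 : σ ^ (-((n : ℝ) + 1)) * σ ^ m = σ ^ (-(k + 1)) := by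
            rw [← Real.rpow_natCast σ m, ← Real.rpow_add hσ', hk]
            congr 1
            ring
          rw [e1, ← hBdet_sqrt, e2, e3, e4, mul_pow, ← e5]
          have hsne : Real.sqrt (Aᵀ * A).det ≠ 0 := by
            rw [hBdet_sqrt]; exact ne_of_gt hBdet_pos
          have hc : Real.sqrt (Aᵀ * A).det * (Real.sqrt (Aᵀ * A).det)⁻¹ = 1 :=
            mul_inv_cancel₀ hsne
          linear_combination (σ ^ (-((n:ℝ) + 1)) * σ ^ m * Real.sqrt RSS *
            Real.exp (-(RSS / 2) * σ ^ (-2 : ℝ)) * Real.sqrt (2 * π) ^ m) * hc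
  -- per-σ integrability in β
  have hIntβ : ∀ σ ∈ Ioi (0:ℝ), Integrable (fun β => f β σ) := by
    intro σ hσ
    have hσ' : (0:ℝ) < σ := hσ
    have hb : (0:ℝ) < (2 * σ ^ 2)⁻¹ := by positivity
    have base := ((gauss_pi_integrable hb B (ne_of_gt hBdet_pos)).comp_sub_right βh).const_mul
        (σ ^ (-((n : ℝ) + 1)) * Real.sqrt (Aᵀ * A).det * Real.sqrt RSS *
          Real.exp (-((2 * σ ^ 2)⁻¹ * RSS)))
    exact base.congr (Filter.Eventually.of_forall fun β => (hptw σ hσ' β).symm)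
  -- measurability of the uncurried function
  have hc_cont : Continuous (fun β : Fin m → ℝ => ∑ i, (y i - (A *ᵥ β) i) ^ 2) := by
    apply continuous_finset_sum
    intro i _
    have hmv : Continuous fun β : Fin m → ℝ => (A *ᵥ β) i := by
      simpa [Matrix.mulVec, dotProduct] using
        (continuous_finset_sum (Finset.univ : Finset (Fin m))
          fun j _ => (continuous_const.mul (continuous_apply j)))
    exact (continuous_const.sub hmv).pow 2
  have hmeasF : AEStronglyMeasurable (Function.uncurry f)
      ((volume : Measure (Fin m → ℝ)).prod (volume.restrict (Ioi 0))) := by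
    refine Measurable.aestronglyMeasurable ?_
    have h1 : Measurable fun p : (Fin m → ℝ) × ℝ => p.2 ^ (-((n : ℝ) + 1)) := by fun_prop
    have h2 : Measurable fun p : (Fin m → ℝ) × ℝ =>
        Real.exp (-(∑ i, (y i - (A *ᵥ p.1) i) ^ 2) / (2 * p.2 ^ 2)) := by
      apply Real.measurable_exp.comp
      exact ((hc_cont.measurable.comp measurable_fst).neg).div
        ((measurable_snd.pow_const 2).const_mul 2)
    exact ((h1.mul h2).mul_const _).mul_const _
  -- integrability on the product
  have hIntF : Integrable (Function.uncurry f)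
      ((volume : Measure (Fin m → ℝ)).prod (volume.restrict (Ioi 0))) := by
    rw [integrable_prod_iff' hmeasF]
    constructor
    · filter_upwards [ae_restrict_mem measurableSet_Ioi] with σ hσ
      exact hIntβ σ hσ
    · apply (((aux_integrable_inv_sq hkpos (half_pos hpos)).const_mul
        (Real.sqrt RSS * Real.sqrt (2 * π) ^ m))).congr
      filter_upwards [ae_restrict_mem measurableSet_Ioi] with σ hσ
      have hσ' : (0:ℝ) < σ := hσ
      have h2 : ∫ x : Fin m → ℝ, ‖Function.uncurry f (x, σ)‖ = ∫ β : Fin m → ℝ, f β σ := by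
        refine integral_congr_ae (Filter.Eventually.of_forall fun β => ?_)
        refine Real.norm_of_nonneg ?_
        show 0 ≤ f β σ
        simp only [hf]
        positivity
      rw [h2, hgval σ hσ]
  -- main computation
  calc (∫ β : Fin m → ℝ, ∫ σ in Set.Ioi (0 : ℝ),
        σ ^ (-((n : ℝ) + 1)) *
          Real.exp (-(∑ i, (y i - (A *ᵥ β) i) ^ 2) / (2 * σ ^ 2)) *
          Real.sqrt (Aᵀ * A).det * Real.sqrt RSS)
      = ∫ β : Fin m → ℝ, ∫ σ in Ioi (0:ℝ), f β σ := rfl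
    _ = ∫ σ in Ioi (0:ℝ), ∫ β : Fin m → ℝ, f β σ := integral_integral_swap hIntF
    _ = ∫ σ in Ioi (0:ℝ), (Real.sqrt RSS * Real.sqrt (2 * π) ^ m) *
          (σ ^ (-(k + 1)) * Real.exp (-(RSS / 2) * σ ^ (-2 : ℝ))) :=
        setIntegral_congr_fun measurableSet_Ioi (fun σ hσ => hgval σ hσ)
    _ = (Real.sqrt RSS * Real.sqrt (2 * π) ^ m) *
          ∫ σ in Ioi (0:ℝ), σ ^ (-(k + 1)) * Real.exp (-(RSS / 2) * σ ^ (-2 : ℝ)) :=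
        integral_const_mul _ _
    _ = (Real.sqrt RSS * Real.sqrt (2 * π) ^ m) *
          ((RSS / 2) ^ (-k / 2) * (1 / 2) * Real.Gamma (k / 2)) := by
        rw [aux_integral_inv_sq hkpos (half_pos hpos)]
    _ = 2 ^ (((n : ℝ) - 2) / 2) * π ^ ((m : ℝ) / 2) *
        Real.Gamma (k / 2) * RSS ^ (-((k - 1) / 2)) := by
        rw [hk]
        have h6 : Real.sqrt (2 * π) ^ m = (2:ℝ) ^ ((m:ℝ)/2) * π ^ ((m:ℝ)/2) := by
          rw [Real.sqrt_eq_rpow, ← Real.rpow_natCast ((2*π) ^ (1/2:ℝ)) m,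
            ← Real.rpow_mul (by positivity), Real.mul_rpow (by norm_num) pi_pos.le,
            show (1/2:ℝ) * (m:ℝ) = (m:ℝ)/2 from by ring]
        rw [h6, Real.sqrt_eq_rpow,
          Real.div_rpow hpos.le (by norm_num : (0:ℝ) ≤ 2),
          show ((n:ℝ) - 2) / 2 = (m:ℝ)/2 + ((((n:ℝ) - m)/2) + (-1:ℝ)) by ring,
          Real.rpow_add two_pos, Real.rpow_add two_pos, Real.rpow_neg_one,
          show -(((n:ℝ) - m - 1)/2) = 1/2 + (-(((n:ℝ) - m)) / 2) by ring,
          Real.rpow_add hpos,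
          show (-((n:ℝ) - ↑m) / 2) = -(((n:ℝ) - ↑m) / 2) by ring,
          Real.rpow_neg (by norm_num : (0:ℝ) ≤ 2)]
        have h2ne : ((2:ℝ) ^ (((n:ℝ) - m)/2)) ≠ 0 := by positivity
        field_simp
end
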